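/- arXiv:1306.3443 — 9 statements merged into one kernel-verified Lean document; each statement's English description precedes it below -/
import Mathlib

section
/- Cohn-type irreducibility criterion: let f(t) = t^m + a_{m-1}t^{m-1} + ... + a_1 t + a_0 ∈ ℤ[t] be monic of degree m ≥ 1, and let H = max over 0 ≤ i ≤ m-1 of |a_i|. If there exists an integer n ≥ H + 2 such that f(n) is prime, then f is irreducible in ℤ[t]. -/
open Polynomial

lemma aux_eval_not_unit (f g : Polynomial ℤ) (m : ℕ) (hmonic : f.Monic)
    (hdeg : f.natDegree = m) (n : ℤ)
    (hn : (((Finset.range m).sup fun i => (f.coeff i).natAbs : ℕ) : ℤ) + 2 ≤ n)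
    (hg : g ∣ f) (hgd : 1 ≤ g.natDegree) :
    ¬ IsUnit (g.eval n) := by
  intro hu
  set H : ℕ := (Finset.range m).sup fun i => (f.coeff i).natAbs with hH
  have hinj : Function.Injective (Int.castRingHom ℂ) := fun a b h => by
    simpa using h
  set F : Polynomial ℂ := f.map (Int.castRingHom ℂ) with hF
  set G : Polynomial ℂ := g.map (Int.castRingHom ℂ) with hGdef
  have hFm : F.Monic := hmonic.map _
  have hFdeg : F.natDegree = m := by
    rw [hF, Polynomial.natDegree_map_eq_of_injective hinj, hdeg]
  have hF0 : F ≠ 0 := hFm.ne_zero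
  have hGdeg : G.natDegree = g.natDegree :=
    Polynomial.natDegree_map_eq_of_injective hinj g
  have hg0 : g ≠ 0 := by
    intro h; rw [h] at hgd; simp at hgd
  have hG0 : G ≠ 0 := by
    simpa [hGdef, Polynomial.map_eq_zero_iff hinj] using hg0
  -- leading coefficient of g is a unit
  have hlcg : IsUnit g.leadingCoeff := by
    obtain ⟨q, hq⟩ := hg
    have : g.leadingCoeff * q.leadingCoeff = 1 := by
      rw [← Polynomial.leadingCoeff_mul, ← hq, hmonic.leadingCoeff]
    exact IsUnit.of_mul_eq_one _ this
  have hlcg' : g.leadingCoeff = 1 ∨ g.leadingCoeff = -1 := Int.isUnit_iff.mp hlcg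
  have hlcG : ‖G.leadingCoeff‖₊ = 1 := by
    have : G.leadingCoeff = ((g.leadingCoeff : ℤ) : ℂ) := by
      rw [hGdef, Polynomial.leadingCoeff, Polynomial.coeff_map, hGdeg]; rfl
    rw [this]
    rcases hlcg' with h | h <;> simp [h]
  -- bound on H as integer vs n
  have hHn : (H : ℝ) + 1 ≤ (n : ℝ) - 1 := by
    have h1 : (H : ℤ) + 2 ≤ n := hn
    have h2 : ((H : ℤ) : ℝ) + 2 ≤ (n : ℝ) := by exact_mod_cast h1
    push_cast at h2 ⊢
    linarith
  have hnpos : (0 : ℝ) < (n : ℝ) := by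
    have h0 : (0 : ℤ) ≤ (H : ℤ) := Int.natCast_nonneg H
    have : (0 : ℤ) < n := by linarith [hn]
    exact_mod_cast this
  -- every root of G has norm < H + 1
  have hroot : ∀ r ∈ G.roots, (1 : ℝ) < ‖(n : ℂ) - r‖ := by
    intro r hr
    have hrG : G.IsRoot r := Polynomial.isRoot_of_mem_roots hr
    have hrF : F.IsRoot r := by
      obtain ⟨q, hq⟩ := hg
      have : F = G * q.map (Int.castRingHom ℂ) := by
        rw [hF, hGdef, ← Polynomial.map_mul, ← hq]
      rw [Polynomial.IsRoot, this, Polynomial.eval_mul, hrG.eq_zero, zero_mul]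
    have hcb : ‖r‖₊ < F.cauchyBound := hrF.norm_lt_cauchyBound hF0
    have hcble : F.cauchyBound ≤ (H : NNReal) + 1 := by
      rw [Polynomial.cauchyBound, hFm.leadingCoeff]
      simp only [nnnorm_one, div_one]
      gcongr
      apply Finset.sup_le
      intro i hi
      rw [hFdeg] at hi
      have h1 : ‖F.coeff i‖₊ = ((f.coeff i).natAbs : NNReal) := by
        rw [hF, Polynomial.coeff_map]
        simp [← NNReal.natCast_natAbs]
      rw [h1]
      exact_mod_cast Finset.le_sup (f := fun i => (f.coeff i).natAbs) hi
    have hrH : ‖r‖ < (H : ℝ) + 1 := by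
      have := lt_of_lt_of_le hcb hcble
      have h2 : (‖r‖₊ : ℝ) < ((H : NNReal) : ℝ) + 1 := by exact_mod_cast this
      simpa using h2
    have h3 : (n : ℝ) - ‖r‖ ≤ ‖(n : ℂ) - r‖ := by
      have := norm_sub_norm_le ((n : ℂ)) r
      have hn' : ‖((n : ℂ))‖ = (n : ℝ) := by
        rw [Complex.norm_intCast]
        rw [abs_of_pos]; exact_mod_cast hnpos
      linarith [this, hn'.ge, hn'.le]
    linarith
  -- G splits
  have hsplits : Polynomial.Splits G := IsAlgClosed.splits G
  have hcard : G.roots.card = G.natDegree := Polynomial.splits_iff_card_roots.mp hsplits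
  have hfact : G = Polynomial.C G.leadingCoeff *
      (G.roots.map fun a => Polynomial.X - Polynomial.C a).prod :=
    hsplits.eq_prod_roots
  -- evaluate at n
  have heval : ((g.eval n : ℤ) : ℂ) = G.eval (n : ℂ) := by
    rw [hGdef]
    exact (Polynomial.eval_intCast_map (Int.castRingHom ℂ) g n).symm
  have hnorm : ‖G.eval (n : ℂ)‖₊ =
      (G.roots.map fun r => ‖(n : ℂ) - r‖₊).prod := by
    conv_lhs => rw [hfact]
    rw [Polynomial.eval_mul, Polynomial.eval_C, nnnorm_mul, hlcG, one_mul]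
    rw [Polynomial.eval_multiset_prod]
    rw [← nnnormHom_apply, map_multiset_prod]
    congr 1
    rw [Multiset.map_map, Multiset.map_map]
    apply Multiset.map_congr rfl
    intro r hr
    simp [nnnormHom_apply]
  -- the product is > 1
  have hcardpos : 0 < G.roots.card := by
    rw [hcard, hGdeg]; exact hgd
  obtain ⟨r0, hr0⟩ := Multiset.card_pos_iff_exists_mem.mp hcardpos
  obtain ⟨s, hs⟩ := Multiset.exists_cons_of_mem hr0
  have hprod : (1 : NNReal) < (G.roots.map fun r => ‖(n : ℂ) - r‖₊).prod := by
    rw [hs, Multiset.map_cons, Multiset.prod_cons]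
    have h1 : (1 : NNReal) < ‖(n : ℂ) - r0‖₊ := by
      have := hroot r0 hr0
      rw [← coe_nnnorm] at this
      exact_mod_cast this
    have h2 : (1 : NNReal) ≤ (s.map fun r => ‖(n : ℂ) - r‖₊).prod := by
      apply Multiset.one_le_prod
      intro a ha
      obtain ⟨r, hr, rfl⟩ := Multiset.mem_map.mp ha
      have hrmem : r ∈ G.roots := by rw [hs]; exact Multiset.mem_cons_of_mem hr
      have := hroot r hrmem
      rw [← coe_nnnorm] at this
      exact_mod_cast this.le
    exact lt_of_lt_of_le h1 (le_mul_of_one_le_right zero_le h2)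
  -- but g.eval n is a unit, so its norm is 1
  have hu' : g.eval n = 1 ∨ g.eval n = -1 := Int.isUnit_iff.mp hu
  have : ‖G.eval (n : ℂ)‖₊ = 1 := by
    rw [← heval]
    rcases hu' with h | h <;> simp [h]
  rw [hnorm] at this
  rw [this] at hprod
  exact lt_irrefl _ hprod

theorem stmt_6 (f : Polynomial ℤ) (m : ℕ) (hm : 1 ≤ m) (hmonic : f.Monic)
    (hdeg : f.natDegree = m) (n : ℤ)
    (hn : (((Finset.range m).sup fun i => (f.coeff i).natAbs : ℕ) : ℤ) + 2 ≤ n)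
    (hprime : Prime (f.eval n)) :
    Irreducible f := by
  constructor
  · intro hu
    have := Polynomial.natDegree_eq_zero_of_isUnit hu
    omega
  · intro a b hab
    have hevals : f.eval n = a.eval n * b.eval n := by rw [hab, Polynomial.eval_mul]
    have hirr : Irreducible (f.eval n) := hprime.irreducible
    have := hirr.isUnit_or_isUnit hevals
    -- if a is not a unit, its natDegree ≥ 1 and eval is not a unit
    have key : ∀ g h : Polynomial ℤ, f = g * h → ¬ IsUnit g → ¬ IsUnit (g.eval n) := by
      intro g h hgh hgu
      have hdvd : g ∣ f := ⟨h, hgh⟩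
      have hlcg : IsUnit g.leadingCoeff := by
        have : g.leadingCoeff * h.leadingCoeff = 1 := by
          rw [← Polynomial.leadingCoeff_mul, ← hgh, hmonic.leadingCoeff]
        exact IsUnit.of_mul_eq_one _ this
      have hgd : 1 ≤ g.natDegree := by
        by_contra hlt
        push_neg at hlt
        interval_cases hgd : g.natDegree
        · have := Polynomial.isUnit_C.mpr hlcg
          rw [Polynomial.leadingCoeff, hgd] at this
          rw [Polynomial.eq_C_of_natDegree_eq_zero hgd] at hgu
          exact hgu this
      exact aux_eval_not_unit f g m hmonic hdeg n hn hdvd hgd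
    rcases this with h | h
    · by_contra hcon
      push_neg at hcon
      exact key a b hab hcon.1 h
    · by_contra hcon
      push_neg at hcon
      exact key b a (by rw [hab, mul_comm]) hcon.2 h
end

section
/- The 5×5 matrix G with G_{ii} = 1, G_{12} = G_{21} = G_{34} = G_{43} = -cos(π/5), G_{14} = G_{41} = G_{23} = G_{32} = G_{25} = G_{52} = G_{45} = G_{54} = -1/2, and all other entries 0, has signature (4,1): it has exactly one negative eigenvalue and four positive eigenvalues. -/
open Real Matrix

noncomputable def G : Matrix (Fin 5) (Fin 5) ℝ :=
  !![1, -Real.cos (Real.pi / 5), 0, -(1 / 2), 0;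
     -Real.cos (Real.pi / 5), 1, -(1 / 2), 0, -(1 / 2);
     0, -(1 / 2), 1, -Real.cos (Real.pi / 5), 0;
     -(1 / 2), 0, -Real.cos (Real.pi / 5), 1, -(1 / 2);
     0, -(1 / 2), 0, -(1 / 2), 1]

lemma quad_eq (x : Fin 5 → ℝ) : x ⬝ᵥ (G *ᵥ x) =
    x 0^2 + x 1^2 + x 2^2 + x 3^2 + x 4^2
      - (1 + Real.sqrt 5)/2 * (x 0 * x 1 + x 2 * x 3)
      - (x 1 * x 2 + x 0 * x 3 + x 1 * x 4 + x 3 * x 4) := by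
  simp [G, dotProduct, mulVec, Fin.sum_univ_five, Real.cos_pi_div_five]
  ring

lemma sqrt5_sq : Real.sqrt 5 ^ 2 = 5 := Real.sq_sqrt (by norm_num)

lemma sqrt5_lt : Real.sqrt 5 < 3 := by
  nlinarith [sqrt5_sq, Real.sqrt_nonneg 5]

lemma sqrt5_pos : (0:ℝ) < Real.sqrt 5 := Real.sqrt_pos.mpr (by norm_num)

set_option maxHeartbeats 1000000 in
lemma pos_on_hyperplane (x : Fin 5 → ℝ) (hx : x ≠ 0)
    (hφ : x 3 + (1/11 + 3/11 * Real.sqrt 5) * x 4 = 0) :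
    0 < x ⬝ᵥ (G *ᵥ x) := by
  have hs := sqrt5_sq
  have hs0 := sqrt5_pos
  have hs3 := sqrt5_lt
  set s := Real.sqrt 5 with hsdef
  have key : x ⬝ᵥ (G *ᵥ x) =
      (x 0 - (1/4 + s/4) * x 1 - (1/2) * x 3)^2
      + (5 - s)/8 * (x 1 - (1 + s/5) * x 2 - (1/2 + 3*s/10) * x 3 - (1 + s/5) * x 4)^2
      + (5 - s)/10 * (x 2 - (9/4 + 5*s/4) * x 3 - (3/2 + s/2) * x 4)^2
      + (12 + 3*s)/11 * (x 4)^2 := by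
    rw [quad_eq]
    linear_combination
      ((1757/4840 : ℝ) * x 4^2 + (39/44) * x 3 * x 4 - (19/80) * x 3^2
        - (1/20) * x 2 * x 4 - (9/40) * x 2 * x 3 + (1/40) * x 2^2
        - (1/20) * x 1 * x 4 - (3/40) * x 1 * x 3 - (1/20) * x 1 * x 2 - (1/16) * x 1^2
        + s * ((3651/24200) * x 4^2 + (7/50) * x 3 * x 4 + (67/400) * x 3^2
          + (1/100) * x 2 * x 4 + (3/200) * x 2 * x 3 + (1/200) * x 2^2)) * hs
      - ((25 + 13*s)/8 * (x 3 + (1/11 + 3/11*s) * x 4)) * hφ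
  by_contra hq
  push_neg at hq
  rw [key] at hq
  have c1 : (0:ℝ) < (5 - s)/8 := by linarith
  have c2 : (0:ℝ) < (5 - s)/10 := by linarith
  have c4 : (0:ℝ) < (12 + 3*s)/11 := by linarith
  have sq0 := sq_nonneg (x 0 - (1/4 + s/4) * x 1 - (1/2) * x 3)
  have sq1 := sq_nonneg (x 1 - (1 + s/5) * x 2 - (1/2 + 3*s/10) * x 3 - (1 + s/5) * x 4)
  have sq2 := sq_nonneg (x 2 - (9/4 + 5*s/4) * x 3 - (3/2 + s/2) * x 4)
  have sq4 := sq_nonneg (x 4)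
  have m1 := mul_nonneg c1.le sq1
  have m2 := mul_nonneg c2.le sq2
  have m4 := mul_nonneg c4.le sq4
  have h0 : x 0 - (1/4 + s/4) * x 1 - (1/2) * x 3 = 0 :=
    sq_eq_zero_iff.mp (le_antisymm (by linarith) sq0)
  have h1 : x 1 - (1 + s/5) * x 2 - (1/2 + 3*s/10) * x 3 - (1 + s/5) * x 4 = 0 := by
    refine sq_eq_zero_iff.mp (le_antisymm ?_ sq1)
    refine le_of_mul_le_mul_left ?_ c1
    rw [mul_zero]; linarith
  have h2 : x 2 - (9/4 + 5*s/4) * x 3 - (3/2 + s/2) * x 4 = 0 := by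
    refine sq_eq_zero_iff.mp (le_antisymm ?_ sq2)
    refine le_of_mul_le_mul_left ?_ c2
    rw [mul_zero]; linarith
  have h4 : x 4 = 0 := by
    refine sq_eq_zero_iff.mp (le_antisymm ?_ sq4)
    refine le_of_mul_le_mul_left ?_ c4
    rw [mul_zero]; linarith
  have h3 : x 3 = 0 := by linear_combination hφ - (1/11 + 3/11*s) * h4
  have h2' : x 2 = 0 := by linear_combination h2 + (9/4 + 5*s/4) * h3 + (3/2 + s/2) * h4
  have h1' : x 1 = 0 := by
    linear_combination h1 + (1 + s/5) * h2' + (1/2 + 3*s/10) * h3 + (1 + s/5) * h4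
  have h0' : x 0 = 0 := by linear_combination h0 + (1/4 + s/4) * h1' + (1/2) * h3
  apply hx
  funext i
  fin_cases i <;> assumption
theorem stmt_8 (hG : G.IsHermitian) :
    (Finset.univ.filter fun i => hG.eigenvalues i < 0).card = 1 ∧
    (Finset.univ.filter fun i => 0 < hG.eigenvalues i).card = 4 := by
  classical
  -- there is a negative eigenvalue
  have hneg : ∃ i, hG.eigenvalues i < 0 := by
    by_contra h
    push_neg at h
    have hpsd := hG.posSemidef_iff_eigenvalues_nonneg.mpr h
    have h2 := hpsd.dotProduct_mulVec_nonneg ![1,1,1,1,1]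
    have h3 := quad_eq ![1,1,1,1,1]
    simp [dotProduct] at h2 h3
    rw [h3] at h2
    norm_num at h2
    nlinarith [sqrt5_pos]
  -- at most one nonpositive eigenvalue
  have huniq : ∀ i j, hG.eigenvalues i ≤ 0 → hG.eigenvalues j ≤ 0 → i = j := by
    intro i j hi hj
    by_contra hij
    set u : Fin 5 → ℝ := ⇑(hG.eigenvectorBasis i) with hu
    set w : Fin 5 → ℝ := ⇑(hG.eigenvectorBasis j) with hw
    have hGu : G *ᵥ u = hG.eigenvalues i • u := hG.mulVec_eigenvectorBasis i
    have hGw : G *ᵥ w = hG.eigenvalues j • w := hG.mulVec_eigenvectorBasis j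
    have horth := hG.eigenvectorBasis.orthonormal
    have huu : u ⬝ᵥ u = 1 := by
      have h := orthonormal_iff_ite.mp horth i i
      simp only [EuclideanSpace.inner_eq_star_dotProduct, if_pos rfl] at h
      simpa [dotProduct] using h
    have hww : w ⬝ᵥ w = 1 := by
      have h := orthonormal_iff_ite.mp horth j j
      simp only [EuclideanSpace.inner_eq_star_dotProduct, if_pos rfl] at h
      simpa [dotProduct] using h
    have huw : u ⬝ᵥ w = 0 := by
      have h := orthonormal_iff_ite.mp horth i j
      simp only [EuclideanSpace.inner_eq_star_dotProduct, if_neg hij] at h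
      rw [dotProduct_comm]; simpa [dotProduct] using h
    have hwu : w ⬝ᵥ u = 0 := by rwa [dotProduct_comm] at huw
    set φ : (Fin 5 → ℝ) → ℝ := fun z => z 3 + (1/11 + 3/11 * Real.sqrt 5) * z 4 with hφdef
    have hqu : u ⬝ᵥ (G *ᵥ u) = hG.eigenvalues i := by
      rw [hGu, dotProduct_smul, smul_eq_mul, huu, mul_one]
    have hqw : w ⬝ᵥ (G *ᵥ w) = hG.eigenvalues j := by
      rw [hGw, dotProduct_smul, smul_eq_mul, hww, mul_one]
    have hune : u ≠ 0 := by
      intro h0; rw [h0] at huu; simp at huu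
    have hwne : w ≠ 0 := by
      intro h0; rw [h0] at hww; simp at hww
    by_cases hpu : φ u = 0
    · have := pos_on_hyperplane u hune hpu
      rw [hqu] at this; linarith
    by_cases hpw : φ w = 0
    · have := pos_on_hyperplane w hwne hpw
      rw [hqw] at this; linarith
    · set x : Fin 5 → ℝ := φ w • u - φ u • w with hxdef
      have hφx : φ x = 0 := by
        simp only [hxdef, hφdef, Pi.sub_apply, Pi.smul_apply, smul_eq_mul]
        ring
      have hxx : x ⬝ᵥ x = (φ w)^2 + (φ u)^2 := by
        simp only [hxdef, sub_dotProduct, dotProduct_sub,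
          smul_dotProduct, dotProduct_smul, smul_eq_mul,
          huu, hww, huw, hwu]
        ring
      have hxne : x ≠ 0 := by
        intro h0
        rw [h0] at hxx
        simp [dotProduct] at hxx
        exact hpw (pow_eq_zero_iff (n := 2) (by norm_num) |>.mp (by nlinarith [sq_nonneg (φ u), sq_nonneg (φ w)]))
      have hqx : x ⬝ᵥ (G *ᵥ x) = (φ w)^2 * hG.eigenvalues i + (φ u)^2 * hG.eigenvalues j := by
        have : G *ᵥ x = φ w • (hG.eigenvalues i • u) - φ u • (hG.eigenvalues j • w) := by
          rw [hxdef, Matrix.mulVec_sub, Matrix.mulVec_smul, Matrix.mulVec_smul, hGu, hGw]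
        rw [this]
        simp only [hxdef, sub_dotProduct, dotProduct_sub,
          smul_dotProduct, dotProduct_smul, smul_eq_mul,
          huu, hww, huw, hwu]
        ring
      have hpos := pos_on_hyperplane x hxne hφx
      rw [hqx] at hpos
      nlinarith [sq_nonneg (φ u), sq_nonneg (φ w)]
  obtain ⟨i0, hi0⟩ := hneg
  have hNset : (Finset.univ.filter fun i => hG.eigenvalues i < 0) = {i0} := by
    apply Finset.eq_singleton_iff_unique_mem.mpr
    exact ⟨Finset.mem_filter.mpr ⟨Finset.mem_univ _, hi0⟩,
      fun j hj => huniq j i0 (Finset.mem_filter.mp hj).2.le hi0.le⟩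
  have hNPset : (Finset.univ.filter fun i => hG.eigenvalues i ≤ 0) = {i0} := by
    apply Finset.eq_singleton_iff_unique_mem.mpr
    exact ⟨Finset.mem_filter.mpr ⟨Finset.mem_univ _, hi0.le⟩,
      fun j hj => huniq j i0 (Finset.mem_filter.mp hj).2 hi0.le⟩
  refine ⟨by rw [hNset]; rfl, ?_⟩
  have hsplit := Finset.card_filter_add_card_filter_not
    (s := (Finset.univ : Finset (Fin 5))) (p := fun i => 0 < hG.eigenvalues i)
  have : (Finset.univ.filter fun i => ¬ 0 < hG.eigenvalues i) =
      (Finset.univ.filter fun i => hG.eigenvalues i ≤ 0) := by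
    apply Finset.filter_congr
    intro a _
    simp [not_lt]
  rw [this, hNPset] at hsplit
  simpa using hsplit
end

section
/- The determinant of the 5×5 matrix G (with G_{ii}=1, G_{12}=G_{21}=G_{34}=G_{43}=-cos(π/5), G_{14}=G_{41}=G_{23}=G_{32}=G_{25}=G_{52}=G_{45}=G_{54}=-1/2, other entries 0) is negative. -/
open Real Matrix

theorem stmt_9 : G.det < 0 := by
  have hc : Real.cos (Real.pi / 5) = (1 + √5) / 4 := Real.cos_pi_div_five
  have h5 : (√5) ^ 2 = 5 := Real.sq_sqrt (by norm_num)
  have h5n : (0:ℝ) ≤ √5 := Real.sqrt_nonneg 5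
  have : G.det = ((1 + √5) / 4) ^ 4 - 2 * ((1 + √5) / 4) ^ 2 - ((1 + √5) / 4) / 2 + 3 / 16 := by
    simp [G, hc, Matrix.det_succ_row_zero, Fin.sum_univ_succ, Fin.succAbove, Fin.castSucc, Fin.castAdd, Fin.castLE]
    ring
  rw [this]
  nlinarith [h5, h5n]
end

section
/- For every palindromic polynomial f ∈ ℤ[t] of even degree n ≥ 2 with f(1) ≠ 0 and f(-1) ≠ 0, the expression g(t) = (t - i)^n · f((t+i)/(t-i)) defines a polynomial with integer coefficients of degree n which is an even function, i.e. g(-t) = g(t). -/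
open Polynomial

theorem stmt_11 (f : Polynomial ℤ) (n : ℕ) (hdeg : f.natDegree = n)
    (hn : 2 ≤ n) (heven : Even n) (hpal : f.reverse = f)
    (h1 : f.eval 1 ≠ 0) (hm1 : f.eval (-1) ≠ 0) :
    ∃ g : Polynomial ℤ, g.natDegree = n ∧ g.comp (-X) = g ∧
      ∀ t : ℂ, t ≠ Complex.I →
        Polynomial.aeval t g
          = (t - Complex.I) ^ n * Polynomial.aeval ((t + Complex.I) / (t - Complex.I)) f := by
  classical
  set ii : GaussianInt := ⟨0, 1⟩ with hii
  set a : ℕ → ℤ := fun k => f.coeff k with ha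
  have hsym : ∀ k ≤ n, a (n - k) = a k := by
    intro k hk
    have h := congrArg (fun p => Polynomial.coeff p k) hpal
    simp only [Polynomial.coeff_reverse, hdeg, Polynomial.revAt_le hk] at h
    simpa [ha] using h
  -- swap lemma
  have hswap : ∀ u v : Polynomial GaussianInt,
      (∑ k ∈ Finset.range (n+1), C ((a k : ℤ) : GaussianInt) * u ^ k * v ^ (n - k))
      = ∑ k ∈ Finset.range (n+1), C ((a k : ℤ) : GaussianInt) * v ^ k * u ^ (n - k) := by
    intro u v
    rw [← Finset.sum_range_reflect]
    refine Finset.sum_congr rfl ?_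
    intro j hj
    have hj' : j ≤ n := Nat.lt_succ_iff.mp (Finset.mem_range.mp hj)
    have e1 : n + 1 - 1 - j = n - j := by omega
    have e2 : n - (n - j) = j := by omega
    rw [e1, e2, hsym j hj']
    ring
  set G : Polynomial GaussianInt :=
    ∑ k ∈ Finset.range (n+1), C ((a k : ℤ) : GaussianInt) * (X + C ii) ^ k * (X - C ii) ^ (n - k)
    with hG
  have hstarii : (starRingEnd GaussianInt) ii = -ii := by
    ext <;> simp [hii, starRingEnd_apply, Zsqrtd.re_star, Zsqrtd.im_star]
  -- star invariance
  have hstarG : G.map (starRingEnd GaussianInt) = G := by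
    rw [hG]
    rw [Polynomial.map_sum]
    have : ∀ k ∈ Finset.range (n+1),
        (C ((a k : ℤ) : GaussianInt) * (X + C ii) ^ k * (X - C ii) ^ (n - k)).map
          (starRingEnd GaussianInt)
        = C ((a k : ℤ) : GaussianInt) * (X - C ii) ^ k * (X + C ii) ^ (n - k) := by
      intro k _
      simp only [Polynomial.map_mul, Polynomial.map_pow, Polynomial.map_add,
        Polynomial.map_sub, Polynomial.map_C, Polynomial.map_X, Polynomial.map_intCast,
        map_intCast, hstarii, map_neg]
      ring
    rw [Finset.sum_congr rfl this, hswap]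
  have φinj : Function.Injective (Int.castRingHom GaussianInt) := by
    intro x y h
    have := congrArg Zsqrtd.re h
    simpa using this
  -- lift G to ℤ[X]
  have hlift : G ∈ Polynomial.lifts (Int.castRingHom GaussianInt) := by
    rw [Polynomial.lifts_iff_coeff_lifts]
    intro k
    have h := congrArg (fun p => Polynomial.coeff p k) hstarG
    simp only [Polynomial.coeff_map] at h
    set z := G.coeff k with hz
    have him : z.im = 0 := by
      have h2 := congrArg Zsqrtd.im h
      rw [starRingEnd_apply, Zsqrtd.im_star] at h2
      omega
    exact ⟨z.re, by ext <;> simp [him]⟩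
  obtain ⟨g, hg⟩ := (Polynomial.mem_lifts _).mp hlift
  -- degree facts
  have hmonic : ∀ k ≤ n, ((X + C ii) ^ k * (X - C ii) ^ (n - k)).Monic := by
    intro k _
    exact ((monic_X_add_C ii).pow k).mul ((monic_X_sub_C ii).pow (n - k))
  have hdegprod : ∀ k ≤ n, ((X + C ii) ^ k * (X - C ii) ^ (n - k)).natDegree = n := by
    intro k hk
    rw [((monic_X_add_C ii).pow k).natDegree_mul ((monic_X_sub_C ii).pow (n-k))]
    rw [natDegree_pow, natDegree_pow, natDegree_X_add_C, natDegree_X_sub_C]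
    omega
  have hGle : G.natDegree ≤ n := by
    rw [hG]
    refine Polynomial.natDegree_sum_le_of_forall_le _ _ ?_
    intro k hk
    have hk' : k ≤ n := Nat.lt_succ_iff.mp (Finset.mem_range.mp hk)
    calc (C ((a k : ℤ) : GaussianInt) * (X + C ii) ^ k * (X - C ii) ^ (n - k)).natDegree
        = (C ((a k : ℤ) : GaussianInt) * ((X + C ii) ^ k * (X - C ii) ^ (n - k))).natDegree := by
          ring_nf
      _ ≤ ((X + C ii) ^ k * (X - C ii) ^ (n - k)).natDegree := natDegree_C_mul_le _ _
      _ = n := hdegprod k hk'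
  have hcoeffn : G.coeff n = ((f.eval 1 : ℤ) : GaussianInt) := by
    rw [hG, Polynomial.finset_sum_coeff]
    have : ∀ k ∈ Finset.range (n+1),
        (C ((a k : ℤ) : GaussianInt) * (X + C ii) ^ k * (X - C ii) ^ (n - k)).coeff n
        = ((a k : ℤ) : GaussianInt) := by
      intro k hk
      have hk' : k ≤ n := Nat.lt_succ_iff.mp (Finset.mem_range.mp hk)
      rw [mul_assoc, coeff_C_mul]
      have := (hmonic k hk').coeff_natDegree
      rw [hdegprod k hk'] at this
      rw [this, mul_one]
    rw [Finset.sum_congr rfl this]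
    have : f.eval 1 = ∑ k ∈ Finset.range (n+1), a k := by
      rw [Polynomial.eval_eq_sum_range, hdeg]
      simp [ha]
    rw [this]
    push_cast
    rfl
  have hfe1 : ((f.eval 1 : ℤ) : GaussianInt) ≠ 0 := by
    simpa using fun h => h1 (φinj (by simpa using h))
  have hGdeg : G.natDegree = n := by
    refine le_antisymm hGle (Polynomial.le_natDegree_of_ne_zero ?_)
    rw [hcoeffn]; exact hfe1
  have hgdeg : g.natDegree = n := by
    have := Polynomial.natDegree_map_eq_of_injective φinj g
    rw [hg] at this
    omega
  -- evenness
  have hGcomp : G.comp (-X) = G := by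
    conv_lhs => rw [hG]
    rw [Polynomial.sum_comp]
    have : ∀ k ∈ Finset.range (n+1),
        (C ((a k : ℤ) : GaussianInt) * (X + C ii) ^ k * (X - C ii) ^ (n - k)).comp (-X)
        = C ((a k : ℤ) : GaussianInt) * (X - C ii) ^ k * (X + C ii) ^ (n - k) := by
      intro k hk
      have hk' : k ≤ n := Nat.lt_succ_iff.mp (Finset.mem_range.mp hk)
      have hpow : ((-1 : Polynomial GaussianInt)) ^ k * (-1) ^ (n - k) = 1 := by
        rw [← pow_add]
        have e : k + (n - k) = n := by omega
        rw [e, heven.neg_one_pow]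
      simp only [mul_comp, pow_comp, add_comp, sub_comp, X_comp, C_comp]
      have e1 : (-X + C ii : Polynomial GaussianInt) = -(X - C ii) := by ring
      have e2 : (-X - C ii : Polynomial GaussianInt) = -(X + C ii) := by ring
      have e3 : (-(X - C ii) : Polynomial GaussianInt) ^ k = (-1) ^ k * (X - C ii) ^ k :=
        neg_pow _ _
      have e4 : (-(X + C ii) : Polynomial GaussianInt) ^ (n - k)
          = (-1) ^ (n - k) * (X + C ii) ^ (n - k) := neg_pow _ _
      rw [e1, e2, e3, e4]
      calc C ((a k : ℤ) : GaussianInt) * ((-1) ^ k * (X - C ii) ^ k) *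
            ((-1) ^ (n - k) * (X + C ii) ^ (n - k))
          = ((-1 : Polynomial GaussianInt) ^ k * (-1) ^ (n - k)) *
            (C ((a k : ℤ) : GaussianInt) * (X - C ii) ^ k * (X + C ii) ^ (n - k)) := by ring
        _ = C ((a k : ℤ) : GaussianInt) * (X - C ii) ^ k * (X + C ii) ^ (n - k) := by
            rw [hpow, one_mul]
    rw [Finset.sum_congr rfl this, hswap]
  have hgcomp : g.comp (-X) = g := by
    apply Polynomial.map_injective _ φinj
    rw [Polynomial.map_comp, hg]
    simpa using hGcomp
  refine ⟨g, hgdeg, hgcomp, ?_⟩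
  intro t ht
  have ht0 : t - Complex.I ≠ 0 := sub_ne_zero.mpr ht
  have hmap : g.map (algebraMap ℤ ℂ) = G.map GaussianInt.toComplex := by
    rw [← hg, Polynomial.map_map]
    congr 1
    exact RingHom.ext_int _ _
  have htoC : GaussianInt.toComplex ii = Complex.I := by
    rw [GaussianInt.toComplex_def, hii]
    simp
  have lhs_eq : Polynomial.aeval t g
      = ∑ k ∈ Finset.range (n+1),
          ((a k : ℤ) : ℂ) * (t + Complex.I) ^ k * (t - Complex.I) ^ (n - k) := by
    rw [Polynomial.aeval_def, ← Polynomial.eval_map, hmap, hG, Polynomial.map_sum,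
      Polynomial.eval_finset_sum]
    refine Finset.sum_congr rfl ?_
    intro k _
    simp [htoC]
  rw [lhs_eq, Polynomial.aeval_eq_sum_range, hdeg, Finset.mul_sum]
  refine Finset.sum_congr rfl ?_
  intro k hk
  have hk' : k ≤ n := Nat.lt_succ_iff.mp (Finset.mem_range.mp hk)
  have hpows : (t - Complex.I) ^ n = (t - Complex.I) ^ (n - k) * (t - Complex.I) ^ k := by
    rw [← pow_add]; congr 1; omega
  rw [zsmul_eq_mul, hpows, div_pow]
  have hk0 : (t - Complex.I) ^ k ≠ 0 := pow_ne_zero _ ht0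
  field_simp
  ring
end

section
/- Let f ∈ ℤ[t] be palindromic of even degree n ≥ 2 with f(±1) ≠ 0, and let g(t) = (t-i)^n f((t+i)/(t-i)), viewed as a polynomial in u = t². Then f has exactly 2k roots (with multiplicity) on the unit circle if and only if g(u) has exactly k positive real roots, and f has exactly 2ℓ real roots if and only if g(u) has exactly ℓ negative real roots. -/
open Polynomial

private lemma multiset_filter_bind {α β : Type*} [DecidableEq α] (s : Multiset β)
    (r : β → Multiset α) (p : α → Prop) [DecidablePred p] :
    (s.bind r).filter p = s.bind fun b => (r b).filter p := by
  induction s using Multiset.induction_on with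
  | empty => simp
  | cons a s ih => simp [Multiset.filter_add, ih]

private lemma multiset_sum_ite {β : Type*} (s : Multiset β) (p : β → Prop) [DecidablePred p] :
    (s.map fun b => if p b then (2:ℕ) else 0).sum = 2 * (s.filter p).card := by
  induction s using Multiset.induction_on with
  | empty => simp
  | cons a s ih =>
    by_cases h : p a <;> simp [h, ih, Multiset.filter_cons, mul_add] <;> omega

/-- real-root transfer from ℝ to ℂ -/
private lemma filter_im_roots_map (p : Polynomial ℝ) :
    ((p.map (algebraMap ℝ ℂ)).roots.filter fun z => z.im = 0)
      = p.roots.map (fun x : ℝ => (x : ℂ)) := by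
  ext z
  rw [Multiset.count_filter]
  by_cases hz : z.im = 0
  · rw [if_pos hz]
    have hzeq : z = ((z.re : ℝ) : ℂ) := by
      apply Complex.ext <;> simp [hz]
    rw [hzeq, Multiset.count_map_eq_count' _ _ Complex.ofReal_injective,
      count_roots, count_roots]
    have := (eq_rootMultiplicity_map (p := p) (f := algebraMap ℝ ℂ)
      (RingHom.injective _) z.re).symm
    simpa using this
  · rw [if_neg hz]
    symm
    rw [Multiset.count_eq_zero]
    intro hmem
    obtain ⟨x, -, rfl⟩ := Multiset.mem_map.mp hmem
    simp at hz

/-- classification of square roots -/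
private lemma sq_im_eq_zero_iff {s u : ℂ} (hs : s ^ 2 = u) (hu : u ≠ 0) :
    (s.im = 0 ↔ (u.im = 0 ∧ 0 < u.re)) ∧ (s.re = 0 ↔ (u.im = 0 ∧ u.re < 0)) := by
  have hre : u.re = s.re * s.re - s.im * s.im := by
    rw [← hs]; simp [pow_two, Complex.mul_re]
  have him : u.im = s.re * s.im + s.im * s.re := by
    rw [← hs]; simp [pow_two, Complex.mul_im]
  have hs0 : s ≠ 0 := by rintro rfl; simp at hs; exact hu hs.symm
  have hs0' : s.re ≠ 0 ∨ s.im ≠ 0 := by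
    by_contra h
    push_neg at h
    exact hs0 (Complex.ext h.1 h.2)
  constructor
  · constructor
    · intro h
      have hr : s.re ≠ 0 := by tauto
      have hp : 0 < s.re * s.re := mul_self_pos.mpr hr
      exact ⟨by rw [him, h]; ring, by rw [hre, h]; nlinarith⟩
    · rintro ⟨h1, h2⟩
      by_contra h
      have hri : s.re * s.im = 0 := by nlinarith [him]
      have hr0 : s.re = 0 := by
        rcases mul_eq_zero.mp hri with h' | h'
        · exact h'
        · exact absurd h' h
      have hp : 0 < s.im * s.im := mul_self_pos.mpr h
      rw [hre, hr0] at h2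
      nlinarith
  · constructor
    · intro h
      have hi : s.im ≠ 0 := by tauto
      have hp : 0 < s.im * s.im := mul_self_pos.mpr hi
      exact ⟨by rw [him, h]; ring, by rw [hre, h]; nlinarith⟩
    · rintro ⟨h1, h2⟩
      by_contra h
      have hri : s.re * s.im = 0 := by nlinarith [him]
      have hi0 : s.im = 0 := by
        rcases mul_eq_zero.mp hri with h' | h'
        · exact absurd h' h
        · exact h'
      have hp : 0 < s.re * s.re := mul_self_pos.mpr h
      rw [hre, hi0] at h2
      nlinarith

private lemma filter_roots_map_card (p : Polynomial ℝ) (q : ℝ → Prop) [DecidablePred q] :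
    (((p.map (algebraMap ℝ ℂ)).roots.filter fun z => z.im = 0 ∧ q z.re).card : ℕ)
      = (p.roots.filter q).card := by
  classical
  have h1 : ((p.map (algebraMap ℝ ℂ)).roots.filter fun z => z.im = 0 ∧ q z.re)
      = ((p.map (algebraMap ℝ ℂ)).roots.filter fun z => z.im = 0).filter
          (fun z => q z.re) := by
    rw [Multiset.filter_filter]
    apply Multiset.filter_congr
    tauto
  rw [h1, filter_im_roots_map, Multiset.filter_map, Multiset.card_map]
  congr 1

private lemma roots_sq_filter (u : ℂ) (hu : u ≠ 0) :
    ((((X : Polynomial ℂ) ^ 2 - Polynomial.C u).roots.filter fun z => z.im = 0).card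
       = if u.im = 0 ∧ 0 < u.re then 2 else 0) ∧
    ((((X : Polynomial ℂ) ^ 2 - Polynomial.C u).roots.filter fun z => z.re = 0).card
       = if u.im = 0 ∧ u.re < 0 then 2 else 0) := by
  classical
  obtain ⟨s, hs⟩ := IsAlgClosed.exists_pow_nat_eq u (n := 2) zero_lt_two
  have hfac : (X - Polynomial.C s) * (X - Polynomial.C (-s))
      = (X : Polynomial ℂ) ^ 2 - Polynomial.C u := by
    rw [map_neg, ← hs, map_pow]
    ring
  have hroots : ((X : Polynomial ℂ) ^ 2 - Polynomial.C u).roots = {s} + {-s} := by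
    rw [← hfac, roots_mul ((monic_X_sub_C s).mul (monic_X_sub_C (-s))).ne_zero,
      roots_X_sub_C, roots_X_sub_C]
  obtain ⟨hiff1, hiff2⟩ := sq_im_eq_zero_iff hs hu
  constructor
  · rw [hroots]
    by_cases h : u.im = 0 ∧ 0 < u.re
    · have hsim : s.im = 0 := hiff1.mpr h
      rw [if_pos h]
      simp [Multiset.filter_add, Multiset.filter_singleton, hsim]
    · have hsim : s.im ≠ 0 := fun hh => h (hiff1.mp hh)
      rw [if_neg h]
      simp [Multiset.filter_add, Multiset.filter_singleton, hsim]
  · rw [hroots]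
    by_cases h : u.im = 0 ∧ u.re < 0
    · have hsre : s.re = 0 := hiff2.mpr h
      rw [if_pos h]
      simp [Multiset.filter_add, Multiset.filter_singleton, hsre]
    · have hsre : s.re ≠ 0 := fun hh => h (hiff2.mp hh)
      rw [if_neg h]
      simp [Multiset.filter_add, Multiset.filter_singleton, hsre]

set_option maxHeartbeats 2000000 in
/-- root-counting correspondence between a palindromic `f` and the
polynomial `g` in `u = t²` defined by `g(t²) = (t-i)^n f((t+i)/(t-i))`. -/
theorem stmt_12 (f g : Polynomial ℤ) (n : ℕ) (hdeg : f.natDegree = n)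
    (hn : 2 ≤ n) (heven : Even n) (hpal : f.reverse = f)
    (h1 : f.eval 1 ≠ 0) (hm1 : f.eval (-1) ≠ 0)
    (hg : ∀ t : ℂ, t ≠ Complex.I →
      Polynomial.aeval (t ^ 2) g
        = (t - Complex.I) ^ n * Polynomial.aeval ((t + Complex.I) / (t - Complex.I)) f) :
    (∀ k : ℕ,
      ((f.map (Int.castRingHom ℂ)).roots.filter fun z => ‖z‖ = 1).card = 2 * k ↔
      ((g.map (Int.castRingHom ℝ)).roots.filter fun u => 0 < u).card = k) ∧
    (∀ l : ℕ,
      (f.map (Int.castRingHom ℝ)).roots.card = 2 * l ↔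
      ((g.map (Int.castRingHom ℝ)).roots.filter fun u => u < 0).card = l) := by
  classical
  set φ : ℤ →+* ℂ := Int.castRingHom ℂ with hφ
  set F : Polynomial ℂ := f.map φ with hF
  set G : Polynomial ℂ := g.map φ with hG
  have hinj : Function.Injective ⇑φ := fun a b h => Int.cast_injective h
  have hf0 : f ≠ 0 := by
    intro h; rw [h] at hdeg; simp at hdeg; omega
  have hF0 : F ≠ 0 := by
    rw [hF, Ne, Polynomial.map_eq_zero_iff hinj]; exact hf0
  have hFdeg : F.natDegree = n := by
    rw [hF, natDegree_map_eq_of_injective hinj, hdeg]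
  -- evaluation transfers
  have haeval : ∀ (p : Polynomial ℤ) (x : ℂ), Polynomial.aeval x p = (p.map φ).eval x := by
    intro p x
    rw [Polynomial.aeval_def, hφ, ← algebraMap_int_eq, Polynomial.eval_map]
  have hevalint : ∀ (p : Polynomial ℤ) (c : ℤ), (p.map φ).eval (c : ℂ) = ((p.eval c : ℤ) : ℂ) := by
    intro p c
    rw [Polynomial.eval_map]
    exact Polynomial.eval₂_at_apply φ c
  -- excluded roots of F
  have hF1 : F.eval 1 ≠ 0 := by
    have := hevalint f 1; push_cast at this; rw [hF, this]; exact_mod_cast h1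
  have hFm1 : F.eval (-1) ≠ 0 := by
    have := hevalint f (-1); push_cast at this; rw [hF, this]; exact_mod_cast hm1
  have RF := F.roots
  have hcard : Multiset.card F.roots = n := by
    rw [← hFdeg]
    exact splits_iff_card_roots.mp (IsAlgClosed.splits F)
  have hmem1 : ∀ z ∈ F.roots, z ≠ 1 := by
    intro z hz h
    exact hF1 (h ▸ (isRoot_of_mem_roots hz))
  have hmemm1 : ∀ z ∈ F.roots, z ≠ -1 := by
    intro z hz h
    exact hFm1 (h ▸ (isRoot_of_mem_roots hz))
  -- Möbius image
  set μ : ℂ → ℂ := fun z => Complex.I * (z + 1) / (z - 1) with hμ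
  set a : ℂ := F.leadingCoeff with ha
  have ha0 : a ≠ 0 := leadingCoeff_ne_zero.mpr hF0
  have hFfac : Polynomial.C a * (F.roots.map fun z => X - Polynomial.C z).prod = F :=
    C_leadingCoeff_mul_prod_multiset_X_sub_C (by rw [hcard, hFdeg])
  set c : ℂ := a * (F.roots.map fun z => 1 - z).prod with hc
  have hc0 : c ≠ 0 := by
    refine mul_ne_zero ha0 (Multiset.prod_ne_zero ?_)
    intro h
    obtain ⟨z, hz, hz0⟩ := Multiset.mem_map.mp h
    exact hmem1 z hz (by linear_combination -hz0)
  set P : Polynomial ℂ :=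
    Polynomial.C c * (F.roots.map fun z => X - Polynomial.C (μ z)).prod with hP
  have hPeval : ∀ t : ℂ, t ≠ Complex.I →
      P.eval t = (t - Complex.I) ^ n * F.eval ((t + Complex.I) / (t - Complex.I)) := by
    intro t ht
    have hti : t - Complex.I ≠ 0 := sub_ne_zero.mpr ht
    have hPev : P.eval t = c * (F.roots.map fun z => t - μ z).prod := by
      rw [hP, eval_mul, eval_C, eval_multiset_prod, Multiset.map_map]
      congr 2
      apply Multiset.map_congr rfl
      intro z _
      simp
    have hFev : F.eval ((t + Complex.I) / (t - Complex.I))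
        = a * (F.roots.map fun z => (t + Complex.I) / (t - Complex.I) - z).prod := by
      conv_lhs => rw [← hFfac]
      rw [eval_mul, eval_C, eval_multiset_prod, Multiset.map_map]
      congr 2
      apply Multiset.map_congr rfl
      intro z _
      simp
    have hpow : (t - Complex.I) ^ n = (F.roots.map fun _ => t - Complex.I).prod := by
      rw [Multiset.map_const', Multiset.prod_replicate, hcard]
    rw [hPev, hFev, hpow, hc, mul_assoc, ← Multiset.prod_map_mul,
      mul_left_comm ((Multiset.map (fun _ => t - Complex.I) F.roots).prod) a,
      ← Multiset.prod_map_mul]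
    congr 2
    apply Multiset.map_congr rfl
    intro z hz
    have hz1 : z - 1 ≠ 0 := sub_ne_zero.mpr (hmem1 z hz)
    rw [hμ]
    field_simp
    ring
  -- H = G ∘ X²
  set H : Polynomial ℂ := G.comp (X ^ 2) with hH
  have hHP : H = P := by
    apply eq_of_infinite_eval_eq
    apply Set.Infinite.mono (s := {(Complex.I)}ᶜ)
    · intro t ht
      have ht' : t ≠ Complex.I := ht
      have h1 := hg t ht'
      rw [haeval, haeval] at h1
      show H.eval t = P.eval t
      rw [hPeval t ht', hH, eval_comp]
      simpa using h1
    · exact Set.Finite.infinite_compl (Set.finite_singleton _)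
  have hProots : P.roots = F.roots.map μ := by
    have hmm : (Multiset.map (fun z => X - Polynomial.C (μ z)) F.roots)
        = Multiset.map (fun w => X - Polynomial.C w) (F.roots.map μ) := by
      rw [Multiset.map_map]; rfl
    rw [hP, roots_C_mul _ hc0, hmm, roots_multiset_prod_X_sub_C]
  -- G side
  have hP0 : P ≠ 0 := by
    rw [hP]
    exact mul_ne_zero (by simpa using hc0)
      (monic_multiset_prod_of_monic _ _ (fun i _ => monic_X_sub_C _)).ne_zero
  have hG0 : G ≠ 0 := by
    intro h
    apply hP0
    rw [← hHP, hH, h, zero_comp]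
  set b : ℂ := G.leadingCoeff with hb
  have hb0 : b ≠ 0 := leadingCoeff_ne_zero.mpr hG0
  have hGfac : Polynomial.C b * (G.roots.map fun u => X - Polynomial.C u).prod = G :=
    C_leadingCoeff_mul_prod_multiset_X_sub_C
      (splits_iff_card_roots.mp (IsAlgClosed.splits G))
  have hHroots : H.roots = G.roots.bind fun u => (X ^ 2 - Polynomial.C u).roots := by
    have hfac2 : H = Polynomial.C b * (G.roots.map fun u => X ^ 2 - Polynomial.C u).prod := by
      conv_lhs => rw [hH, ← hGfac]
      rw [mul_comp, C_comp, multiset_prod_comp, Multiset.map_map]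
      congr 2
      apply Multiset.map_congr rfl
      intro u _
      simp
    have h0m : (0 : Polynomial ℂ) ∉ (G.roots.map fun u => X ^ 2 - Polynomial.C u) := by
      intro hmem
      obtain ⟨u, -, hu⟩ := Multiset.mem_map.mp hmem
      exact (monic_X_pow_sub_C u (two_ne_zero)).ne_zero hu
    rw [hfac2, roots_C_mul _ hb0, roots_multiset_prod _ h0m, Multiset.bind_map]
  have h0G : (0 : ℂ) ∉ G.roots := by
    intro hmem
    have hroot : G.eval 0 = 0 := isRoot_of_mem_roots hmem
    have h00 := hg 0 (fun h => Complex.I_ne_zero h.symm)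
    rw [haeval, haeval] at h00
    have hdiv : ((0:ℂ) + Complex.I) / ((0:ℂ) - Complex.I) = -1 := by
      rw [zero_add, zero_sub, div_neg, div_self Complex.I_ne_zero]
    rw [hdiv, show ((0:ℂ)) ^ 2 = 0 by ring, ← hG, ← hF, hroot] at h00
    have hIn : ((0:ℂ) - Complex.I) ^ n ≠ 0 :=
      pow_ne_zero _ (sub_ne_zero.mpr (fun h => Complex.I_ne_zero h.symm))
    rcases mul_eq_zero.mp h00.symm with h' | h'
    · exact hIn h'
    · exact hFm1 h'
  -- per-root counting
  have hcount : ∀ pr : ℂ → Prop, ∀ inst : DecidablePred pr,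
      (H.roots.filter pr).card
        = (G.roots.map fun u => ((X ^ 2 - Polynomial.C u).roots.filter pr).card).sum := by
    intro pr inst
    rw [hHroots, multiset_filter_bind, Multiset.card_bind]
    rfl
  -- main counting identities
  have hμim : ∀ z ∈ F.roots, ((μ z).im = 0 ↔ ‖z‖ = 1) := by
    intro z hz
    have hz1 : z ≠ 1 := hmem1 z hz
    have hzz : z.re ≠ 1 ∨ z.im ≠ 0 := by
      by_contra h
      push_neg at h
      exact hz1 (Complex.ext h.1 (by simpa using h.2))
    have hnsq : (z.re - 1) ^ 2 + z.im ^ 2 ≠ 0 := by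
      rcases hzz with h | h
      · have : (z.re - 1) ^ 2 > 0 := pow_two_pos_of_ne_zero (sub_ne_zero.mpr h)
        nlinarith [sq_nonneg z.im]
      · have : z.im ^ 2 > 0 := pow_two_pos_of_ne_zero h
        nlinarith [sq_nonneg (z.re - 1)]
    have him : (μ z).im = (z.re ^ 2 + z.im ^ 2 - 1) / ((z.re - 1) ^ 2 + z.im ^ 2) := by
      rw [hμ]
      simp only [Complex.div_im, Complex.mul_im, Complex.mul_re, Complex.normSq_apply,
        Complex.add_re, Complex.add_im, Complex.sub_re, Complex.sub_im, Complex.one_re,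
        Complex.one_im, Complex.I_re, Complex.I_im]
      have hnsq' : (z.re - 1) * (z.re - 1) + z.im * z.im ≠ 0 := by
        intro h; apply hnsq; nlinarith
      simp only [sub_zero, add_zero]
      field_simp
      ring
    have habs : ‖z‖ = 1 ↔ z.re ^ 2 + z.im ^ 2 = 1 := by
      rw [Complex.norm_def, Real.sqrt_eq_one, Complex.normSq_apply]
      constructor <;> intro h <;> nlinarith
    rw [him, _root_.div_eq_zero_iff, habs]
    constructor
    · rintro (h | h)
      · nlinarith
      · exact absurd h hnsq
    · intro h
      left
      nlinarith
  have hμre : ∀ z ∈ F.roots, ((μ z).re = 0 ↔ z.im = 0) := by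
    intro z hz
    have hz1 : z ≠ 1 := hmem1 z hz
    have hzz : z.re ≠ 1 ∨ z.im ≠ 0 := by
      by_contra h
      push_neg at h
      exact hz1 (Complex.ext h.1 (by simpa using h.2))
    have hnsq : (z.re - 1) ^ 2 + z.im ^ 2 ≠ 0 := by
      rcases hzz with h | h
      · have : (z.re - 1) ^ 2 > 0 := pow_two_pos_of_ne_zero (sub_ne_zero.mpr h)
        nlinarith [sq_nonneg z.im]
      · have : z.im ^ 2 > 0 := pow_two_pos_of_ne_zero h
        nlinarith [sq_nonneg (z.re - 1)]
    have hre : (μ z).re = (2 * z.im) / ((z.re - 1) ^ 2 + z.im ^ 2) := by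
      rw [hμ]
      simp only [Complex.div_re, Complex.mul_im, Complex.mul_re, Complex.normSq_apply,
        Complex.add_re, Complex.add_im, Complex.sub_re, Complex.sub_im, Complex.one_re,
        Complex.one_im, Complex.I_re, Complex.I_im]
      have hnsq' : (z.re - 1) * (z.re - 1) + z.im * z.im ≠ 0 := by
        intro h; apply hnsq; nlinarith
      simp only [sub_zero, add_zero]
      field_simp
      ring
    rw [hre, _root_.div_eq_zero_iff]
    constructor
    · rintro (h | h)
      · linarith
      · exact absurd h hnsq
    · intro h
      left
      linarith
  have hHC : (H.roots.filter fun z => z.im = 0).card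
      = (F.roots.filter fun z => ‖z‖ = 1).card := by
    rw [hHP, hProots, Multiset.filter_map, Multiset.card_map]
    congr 1
    apply Multiset.filter_congr
    intro z hz
    exact hμim z hz
  have hHR : (H.roots.filter fun z => z.re = 0).card
      = (F.roots.filter fun z => z.im = 0).card := by
    rw [hHP, hProots, Multiset.filter_map, Multiset.card_map]
    congr 1
    apply Multiset.filter_congr
    intro z hz
    exact hμre z hz
  have hHsumC : (H.roots.filter fun z => z.im = 0).card
      = 2 * (G.roots.filter fun u => u.im = 0 ∧ 0 < u.re).card := by
    rw [hcount _ _, ← multiset_sum_ite G.roots (fun u => u.im = 0 ∧ 0 < u.re)]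
    congr 1
    apply Multiset.map_congr rfl
    intro u hu
    exact (roots_sq_filter u (fun h => h0G (h ▸ hu))).1
  have hHsumR : (H.roots.filter fun z => z.re = 0).card
      = 2 * (G.roots.filter fun u => u.im = 0 ∧ u.re < 0).card := by
    rw [hcount _ _, ← multiset_sum_ite G.roots (fun u => u.im = 0 ∧ u.re < 0)]
    congr 1
    apply Multiset.map_congr rfl
    intro u hu
    exact (roots_sq_filter u (fun h => h0G (h ▸ hu))).2
  have keyC : (F.roots.filter fun z => ‖z‖ = 1).card
      = 2 * (G.roots.filter fun u => u.im = 0 ∧ 0 < u.re).card := hHC ▸ hHsumC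
  have keyR : (F.roots.filter fun z => z.im = 0).card
      = 2 * (G.roots.filter fun u => u.im = 0 ∧ u.re < 0).card := hHR ▸ hHsumR
  -- transfer to ℝ
  have hmapcomp : ∀ p : Polynomial ℤ,
      (p.map (Int.castRingHom ℝ)).map (algebraMap ℝ ℂ) = p.map φ := by
    intro p
    rw [Polynomial.map_map]
    congr 1
  have hgpos : ((g.map (Int.castRingHom ℝ)).roots.filter fun u => 0 < u).card
      = (G.roots.filter fun u => u.im = 0 ∧ 0 < u.re).card := by
    have := filter_roots_map_card (g.map (Int.castRingHom ℝ)) (fun x => 0 < x)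
    rw [hmapcomp g, ← hG] at this
    exact this.symm
  have hgneg : ((g.map (Int.castRingHom ℝ)).roots.filter fun u => u < 0).card
      = (G.roots.filter fun u => u.im = 0 ∧ u.re < 0).card := by
    have := filter_roots_map_card (g.map (Int.castRingHom ℝ)) (fun x => x < 0)
    rw [hmapcomp g, ← hG] at this
    exact this.symm
  have hfreal : (f.map (Int.castRingHom ℝ)).roots.card
      = (F.roots.filter fun z => z.im = 0).card := by
    rw [hF, ← hmapcomp f, filter_im_roots_map, Multiset.card_map]
  constructor
  · intro k
    rw [keyC, hgpos]
    omega
  · intro l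
    rw [hfreal, keyR, hgneg]
    omega
end

section
/- For all nonnegative integers ℓ, m, n with ℓ + m ≤ n, the polynomial Q_{ℓ,m,n}(t) (as defined) satisfies Q_{ℓ,m,n}(0) = 1 > 0, Q_{ℓ,m,n}(1/2) < 0, and Q_{ℓ,m,n}(1) = 32 + 32n > 0; consequently Q_{ℓ,m,n} has a real root in the open interval (0, 1/2) and a real root in (1/2, 1). -/
open Polynomial

/-- The denominator polynomial `Q_{ℓ,m,n}(t)` of the growth function. -/
noncomputable def Q (l m n : ℤ) : Polynomial ℤ :=
  X ^ 18 - C (4 * n + 6) * X ^ 17 + C (2 * n - m + 3) * X ^ 16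
    - C (3 * n - m + l + 5) * X ^ 15 + C (5 * n - 3 * m + 5) * X ^ 14
    - C (n - 4 * m + 1) * X ^ 13 + C (8 * n - 4 * m + l + 9) * X ^ 12
    + C (5 * m - l) * X ^ 11 + C (10 * n - 5 * m + l + 11) * X ^ 10
    - C (2 * n - 6 * m + 2) * X ^ 9 + C (10 * n - 5 * m + l + 11) * X ^ 8
    + C (5 * m - l) * X ^ 7 + C (8 * n - 4 * m + l + 9) * X ^ 6
    - C (n - 4 * m + 1) * X ^ 5 + C (5 * n - 3 * m + 5) * X ^ 4
    - C (3 * n - m + l + 5) * X ^ 3 + C (2 * n - m + 3) * X ^ 2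
    - C (4 * n + 6) * X + 1

theorem stmt_15 (l m n : ℕ) (h : l + m ≤ n) :
    (Q (l : ℤ) (m : ℤ) (n : ℤ)).eval 0 = 1 ∧
    Polynomial.aeval ((1 : ℝ) / 2) (Q (l : ℤ) (m : ℤ) (n : ℤ)) < 0 ∧
    (Q (l : ℤ) (m : ℤ) (n : ℤ)).eval 1 = 32 + 32 * n ∧
    (∃ x ∈ Set.Ioo (0 : ℝ) (1 / 2), Polynomial.aeval x (Q (l : ℤ) (m : ℤ) (n : ℤ)) = 0) ∧
    (∃ y ∈ Set.Ioo ((1 : ℝ) / 2) 1, Polynomial.aeval y (Q (l : ℤ) (m : ℤ) (n : ℤ)) = 0) := by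
  have hl : (0:ℝ) ≤ (l:ℝ) := Nat.cast_nonneg l
  have hm : (0:ℝ) ≤ (m:ℝ) := Nat.cast_nonneg m
  have hn : (0:ℝ) ≤ (n:ℝ) := Nat.cast_nonneg n
  set f : ℝ → ℝ := fun x => Polynomial.aeval x (Q (l : ℤ) (m : ℤ) (n : ℤ)) with hf
  have hcont : Continuous f := by
    simpa [hf] using (Q (l : ℤ) (m : ℤ) (n : ℤ)).continuous_aeval
  have h0 : f 0 = 1 := by simp [hf, Q]
  have hhalf : f (1/2) = (-29512*(l:ℝ) - 58156*m - 372712*n - 367287)/262144 := by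
    simp only [hf, Q, map_add, map_sub, map_mul, map_pow, map_one, map_ofNat, map_natCast, map_intCast, aeval_X, aeval_C,
      algebraMap_int_eq, eq_intCast]
    push_cast
    ring
  have hhalfneg : f (1/2) < 0 := by
    rw [hhalf]
    apply div_neg_of_neg_of_pos
    · nlinarith
    · norm_num
  have h1 : f 1 = 32 + 32*n := by
    simp only [hf, Q, map_add, map_sub, map_mul, map_pow, map_one, map_ofNat, map_natCast, map_intCast, aeval_X, aeval_C,
      algebraMap_int_eq, eq_intCast]
    push_cast
    ring
  have h1pos : (0:ℝ) < f 1 := by rw [h1]; positivity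
  refine ⟨by simp [Q], hhalfneg, ?_, ?_, ?_⟩
  · simp [Q]; ring
  · have := intermediate_value_Ioo' (by norm_num : (0:ℝ) ≤ 1/2) hcont.continuousOn
    have h0m : (0:ℝ) ∈ Set.Ioo (f (1/2)) (f 0) := ⟨hhalfneg, by rw [h0]; norm_num⟩
    obtain ⟨x, hx, hfx⟩ := this h0m
    exact ⟨x, hx, hfx⟩
  · have := intermediate_value_Ioo (by norm_num : (1:ℝ)/2 ≤ 1) hcont.continuousOn
    have h0m : (0:ℝ) ∈ Set.Ioo (f (1/2)) (f 1) := ⟨hhalfneg, h1pos⟩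
    obtain ⟨y, hy, hfy⟩ := this h0m
    exact ⟨y, hy, hfy⟩
end

section
/- For all nonnegative integers ℓ, m, n with ℓ + m ≤ n, the polynomial Q_{ℓ,m,n} satisfies Q_{ℓ,m,n}(1/(4n+5)) < 0 and Q_{ℓ,m,n}(1/(4n+m+ℓ+6)) > 0; hence its smallest positive real root lies strictly between 1/(4n+m+ℓ+6) and 1/(4n+5). In particular, the growth rate τ_{ℓ,m,n} = 1/R (where R is the smallest positive root) satisfies 4n+5 < τ_{ℓ,m,n} < 4n+m+ℓ+6, and τ_{ℓ,m,n} → ∞ as n → ∞. -/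
open Polynomial
set_option maxHeartbeats 2000000

lemma aeval_Q (l m n : ℤ) (x : ℝ) : Polynomial.aeval x (Q l m n) =
  x^18 - (4*(n:ℝ)+6)*x^17 + (2*n-m+3)*x^16 - (3*n-m+l+5)*x^15 + (5*n-3*m+5)*x^14
  - (n-4*m+1)*x^13 + (8*n-4*m+l+9)*x^12 + (5*m-l)*x^11 + (10*n-5*m+l+11)*x^10
  - (2*n-6*m+2)*x^9 + (10*n-5*m+l+11)*x^8 + (5*m-l)*x^7 + (8*n-4*m+l+9)*x^6
  - (n-4*m+1)*x^5 + (5*n-3*m+5)*x^4 - (3*n-m+l+5)*x^3 + (2*n-m+3)*x^2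
  - (4*n+6)*x + 1 := by
  simp [Q, map_ofNat]

lemma term_ub {a M u v : ℝ} (ha : a ≤ M) (hM : 0 ≤ M) (hu : 0 ≤ u) (huv : u ≤ v) :
    a * u ≤ M * v := by nlinarith

lemma term_lb {a M u v : ℝ} (ha : -M ≤ a) (hM : 0 ≤ M) (hu : 0 ≤ u) (huv : u ≤ v) :
    -(M * v) ≤ a * u := by nlinarith

lemma pow_bd {x c : ℝ} (hx : 0 ≤ x) (hxc : x ≤ c) (j : ℕ) : x ^ (3 + j) ≤ x ^ 3 * c ^ j := by
  rw [pow_add]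
  exact mul_le_mul_of_nonneg_left (pow_le_pow_left₀ hx hxc j) (pow_nonneg hx 3)

lemma key_neg (l m n : ℕ) (h : l + m ≤ n) {x : ℝ} (hx : 0 < x)
    (hx1 : x * (4*(n:ℝ)+5) = 1) : Polynomial.aeval x (Q l m n) < 0 := by
  have hL : (0:ℝ) ≤ l := Nat.cast_nonneg l
  have hM : (0:ℝ) ≤ m := Nat.cast_nonneg m
  have hN : (0:ℝ) ≤ n := Nat.cast_nonneg n
  have hLM : (l:ℝ) + m ≤ n := by exact_mod_cast h
  have hx5 : x ≤ 1/5 := by nlinarith [mul_nonneg hN hx.le]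
  have hK : (0:ℝ) ≤ 11*(n:ℝ)+11 := by linarith
  have hp : ∀ j : ℕ, x^(3+j) ≤ x^3 * (1/5:ℝ)^j := fun j => pow_bd hx.le hx5 j
  have t1 : (5*(n:ℝ)-3*m+5) * x^(3+1) ≤ (11*(n:ℝ)+11)*(x^3*(1/5)^1) :=
    term_ub (by linarith) hK (pow_nonneg hx.le _) (hp 1)
  have t2 : (-((n:ℝ)-4*m+1)) * x^(3+2) ≤ (11*(n:ℝ)+11)*(x^3*(1/5)^2) :=
    term_ub (by linarith) hK (pow_nonneg hx.le _) (hp 2)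
  have t3 : (8*(n:ℝ)-4*m+l+9) * x^(3+3) ≤ (11*(n:ℝ)+11)*(x^3*(1/5)^3) :=
    term_ub (by linarith) hK (pow_nonneg hx.le _) (hp 3)
  have t4 : (5*(m:ℝ)-l) * x^(3+4) ≤ (11*(n:ℝ)+11)*(x^3*(1/5)^4) :=
    term_ub (by linarith) hK (pow_nonneg hx.le _) (hp 4)
  have t5 : (10*(n:ℝ)-5*m+l+11) * x^(3+5) ≤ (11*(n:ℝ)+11)*(x^3*(1/5)^5) :=
    term_ub (by linarith) hK (pow_nonneg hx.le _) (hp 5)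
  have t6 : (-(2*(n:ℝ)-6*m+2)) * x^(3+6) ≤ (11*(n:ℝ)+11)*(x^3*(1/5)^6) :=
    term_ub (by linarith) hK (pow_nonneg hx.le _) (hp 6)
  have t7 : (10*(n:ℝ)-5*m+l+11) * x^(3+7) ≤ (11*(n:ℝ)+11)*(x^3*(1/5)^7) :=
    term_ub (by linarith) hK (pow_nonneg hx.le _) (hp 7)
  have t8 : (5*(m:ℝ)-l) * x^(3+8) ≤ (11*(n:ℝ)+11)*(x^3*(1/5)^8) :=
    term_ub (by linarith) hK (pow_nonneg hx.le _) (hp 8)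
  have t9 : (8*(n:ℝ)-4*m+l+9) * x^(3+9) ≤ (11*(n:ℝ)+11)*(x^3*(1/5)^9) :=
    term_ub (by linarith) hK (pow_nonneg hx.le _) (hp 9)
  have t10 : (-((n:ℝ)-4*m+1)) * x^(3+10) ≤ (11*(n:ℝ)+11)*(x^3*(1/5)^10) :=
    term_ub (by linarith) hK (pow_nonneg hx.le _) (hp 10)
  have t11 : (5*(n:ℝ)-3*m+5) * x^(3+11) ≤ (11*(n:ℝ)+11)*(x^3*(1/5)^11) :=
    term_ub (by linarith) hK (pow_nonneg hx.le _) (hp 11)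
  have t12 : (-(3*(n:ℝ)-m+l+5)) * x^(3+12) ≤ (11*(n:ℝ)+11)*(x^3*(1/5)^12) :=
    term_ub (by linarith) hK (pow_nonneg hx.le _) (hp 12)
  have t13 : (2*(n:ℝ)-m+3) * x^(3+13) ≤ (11*(n:ℝ)+11)*(x^3*(1/5)^13) :=
    term_ub (by linarith) hK (pow_nonneg hx.le _) (hp 13)
  have t14 : (-(4*(n:ℝ)+6)) * x^(3+14) ≤ (11*(n:ℝ)+11)*(x^3*(1/5)^14) :=
    term_ub (by linarith) hK (pow_nonneg hx.le _) (hp 14)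
  have t15 : (1:ℝ) * x^(3+15) ≤ (11*(n:ℝ)+11)*(x^3*(1/5)^15) :=
    term_ub (by linarith) hK (pow_nonneg hx.le _) (hp 15)
  have hx2 : (0:ℝ) < x^2 := by positivity
  have h2 : (4*(n:ℝ)+5)*x^2 = x := by linear_combination x * hx1
  have e3 : (11*(n:ℝ)+11)*x < 8*(n:ℝ)+8 := by
    have hKq : ((11*(n:ℝ)+11)*x) * (4*(n:ℝ)+5) = 11*(n:ℝ)+11 := by
      linear_combination (11*(n:ℝ)+11) * hx1
    have h5 : ((11*(n:ℝ)+11)*x) * (4*(n:ℝ)+5) < (8*(n:ℝ)+8) * (4*(n:ℝ)+5) := by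
      nlinarith [sq_nonneg (n:ℝ)]
    exact lt_of_mul_lt_mul_right h5 (by linarith)
  have e4 := mul_lt_mul_of_pos_right e3 hx2
  have hKx3 : (0:ℝ) ≤ (11*(n:ℝ)+11)*x^3 := by positivity
  have hMx2 : (0:ℝ) ≤ (m:ℝ) * x^2 := by positivity
  have hc3 : (0:ℝ) < (3*(n:ℝ)-m+l+5) * x^3 := mul_pos (by linarith) (by positivity)
  rw [aeval_Q]
  push_cast
  linarith [t1, t2, t3, t4, t5, t6, t7, t8, t9, t10, t11, t12, t13, t14, t15, hx1, h2, e4, hKx3, hMx2, hc3]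

lemma key_pos (l m n : ℕ) (h : l + m ≤ n) {x : ℝ} (hx : 0 < x)
    (hxle : x * (4*(n:ℝ)+m+l+6) ≤ 1) : 0 < Polynomial.aeval x (Q l m n) := by
  have hL : (0:ℝ) ≤ l := Nat.cast_nonneg l
  have hM : (0:ℝ) ≤ m := Nat.cast_nonneg m
  have hN : (0:ℝ) ≤ n := Nat.cast_nonneg n
  have hLM : (l:ℝ) + m ≤ n := by exact_mod_cast h
  have hx46 : x * (4*(n:ℝ)+6) ≤ 1 := by
    nlinarith [mul_nonneg hx.le hM, mul_nonneg hx.le hL]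
  have hx6 : x ≤ 1/6 := by nlinarith [mul_nonneg hN hx.le]
  have hK : (0:ℝ) ≤ 11*(n:ℝ)+11 := by linarith
  have hp : ∀ j : ℕ, x^(3+j) ≤ x^3 * (1/6:ℝ)^j := fun j => pow_bd hx.le hx6 j
  have s0 : -((11*(n:ℝ)+11)*(x^3*(1/6)^0)) ≤ (-(3*(n:ℝ)-m+l+5)) * x^(3+0) :=
    term_lb (by linarith) hK (pow_nonneg hx.le _) (hp 0)
  have s1 : -((11*(n:ℝ)+11)*(x^3*(1/6)^1)) ≤ (5*(n:ℝ)-3*m+5) * x^(3+1) :=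
    term_lb (by linarith) hK (pow_nonneg hx.le _) (hp 1)
  have s2 : -((11*(n:ℝ)+11)*(x^3*(1/6)^2)) ≤ (-((n:ℝ)-4*m+1)) * x^(3+2) :=
    term_lb (by linarith) hK (pow_nonneg hx.le _) (hp 2)
  have s3 : -((11*(n:ℝ)+11)*(x^3*(1/6)^3)) ≤ (8*(n:ℝ)-4*m+l+9) * x^(3+3) :=
    term_lb (by linarith) hK (pow_nonneg hx.le _) (hp 3)
  have s4 : -((11*(n:ℝ)+11)*(x^3*(1/6)^4)) ≤ (5*(m:ℝ)-l) * x^(3+4) :=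
    term_lb (by linarith) hK (pow_nonneg hx.le _) (hp 4)
  have s5 : -((11*(n:ℝ)+11)*(x^3*(1/6)^5)) ≤ (10*(n:ℝ)-5*m+l+11) * x^(3+5) :=
    term_lb (by linarith) hK (pow_nonneg hx.le _) (hp 5)
  have s6 : -((11*(n:ℝ)+11)*(x^3*(1/6)^6)) ≤ (-(2*(n:ℝ)-6*m+2)) * x^(3+6) :=
    term_lb (by linarith) hK (pow_nonneg hx.le _) (hp 6)
  have s7 : -((11*(n:ℝ)+11)*(x^3*(1/6)^7)) ≤ (10*(n:ℝ)-5*m+l+11) * x^(3+7) :=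
    term_lb (by linarith) hK (pow_nonneg hx.le _) (hp 7)
  have s8 : -((11*(n:ℝ)+11)*(x^3*(1/6)^8)) ≤ (5*(m:ℝ)-l) * x^(3+8) :=
    term_lb (by linarith) hK (pow_nonneg hx.le _) (hp 8)
  have s9 : -((11*(n:ℝ)+11)*(x^3*(1/6)^9)) ≤ (8*(n:ℝ)-4*m+l+9) * x^(3+9) :=
    term_lb (by linarith) hK (pow_nonneg hx.le _) (hp 9)
  have s10 : -((11*(n:ℝ)+11)*(x^3*(1/6)^10)) ≤ (-((n:ℝ)-4*m+1)) * x^(3+10) :=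
    term_lb (by linarith) hK (pow_nonneg hx.le _) (hp 10)
  have s11 : -((11*(n:ℝ)+11)*(x^3*(1/6)^11)) ≤ (5*(n:ℝ)-3*m+5) * x^(3+11) :=
    term_lb (by linarith) hK (pow_nonneg hx.le _) (hp 11)
  have s12 : -((11*(n:ℝ)+11)*(x^3*(1/6)^12)) ≤ (-(3*(n:ℝ)-m+l+5)) * x^(3+12) :=
    term_lb (by linarith) hK (pow_nonneg hx.le _) (hp 12)
  have s13 : -((11*(n:ℝ)+11)*(x^3*(1/6)^13)) ≤ (2*(n:ℝ)-m+3) * x^(3+13) :=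
    term_lb (by linarith) hK (pow_nonneg hx.le _) (hp 13)
  have s14 : -((11*(n:ℝ)+11)*(x^3*(1/6)^14)) ≤ (-(4*(n:ℝ)+6)) * x^(3+14) :=
    term_lb (by linarith) hK (pow_nonneg hx.le _) (hp 14)
  have s15 : -((11*(n:ℝ)+11)*(x^3*(1/6)^15)) ≤ (1:ℝ) * x^(3+15) :=
    term_lb (by linarith) hK (pow_nonneg hx.le _) (hp 15)
  have hx2 : (0:ℝ) < x^2 := by positivity
  have hhead : 0 ≤ 1 - (4*(n:ℝ)+6)*x := by linarith
  have e3p : 6*((11*(n:ℝ)+11)*x) < (2*(n:ℝ)-m+3)*5 := by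
    have q1 : (6*(11*(n:ℝ)+11)) * (x*(4*(n:ℝ)+6)) ≤ (6*(11*(n:ℝ)+11)) * 1 :=
      mul_le_mul_of_nonneg_left hx46 (by linarith)
    have q2 : 6*(11*(n:ℝ)+11) < ((2*(n:ℝ)-m+3)*5) * (4*(n:ℝ)+6) := by
      nlinarith [mul_nonneg (by linarith : (0:ℝ) ≤ (n:ℝ)-m) hN, sq_nonneg (n:ℝ)]
    have q3 : (6*((11*(n:ℝ)+11)*x)) * (4*(n:ℝ)+6) < ((2*(n:ℝ)-m+3)*5) * (4*(n:ℝ)+6) := by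
      nlinarith [q1, q2]
    exact lt_of_mul_lt_mul_right q3 (by linarith)
  have e4p := mul_lt_mul_of_pos_right e3p hx2
  have hKx3 : (0:ℝ) ≤ (11*(n:ℝ)+11)*x^3 := by positivity
  rw [aeval_Q]
  push_cast
  linarith [s0, s1, s2, s3, s4, s5, s6, s7, s8, s9, s10, s11, s12, s13, s14, s15, hhead, e4p, hKx3]

theorem stmt_16 :
    (∀ l m n : ℕ, l + m ≤ n →
      Polynomial.aeval ((1 : ℝ) / (4 * n + 5)) (Q (l : ℤ) (m : ℤ) (n : ℤ)) < 0 ∧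
      0 < Polynomial.aeval ((1 : ℝ) / (4 * n + m + l + 6)) (Q (l : ℤ) (m : ℤ) (n : ℤ)) ∧
      ∀ R : ℝ, (0 < R ∧ Polynomial.aeval R (Q (l : ℤ) (m : ℤ) (n : ℤ)) = 0 ∧
          ∀ x : ℝ, 0 < x → Polynomial.aeval x (Q (l : ℤ) (m : ℤ) (n : ℤ)) = 0 → R ≤ x) →
        (1 : ℝ) / (4 * n + m + l + 6) < R ∧ R < 1 / (4 * n + 5) ∧
          (4 * n + 5 : ℝ) < 1 / R ∧ 1 / R < 4 * n + m + l + 6) ∧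
    (∀ (l m : ℕ → ℕ) (τ : ℕ → ℝ), (∀ n, l n + m n ≤ n) →
      (∀ n, ∃ R : ℝ, 0 < R ∧
          Polynomial.aeval R (Q (l n : ℤ) (m n : ℤ) (n : ℤ)) = 0 ∧
          (∀ x : ℝ, 0 < x → Polynomial.aeval x (Q (l n : ℤ) (m n : ℤ) (n : ℤ)) = 0 → R ≤ x) ∧
          τ n = 1 / R) →
      Filter.Tendsto τ Filter.atTop Filter.atTop) := by
  have h1 : ∀ l m n : ℕ, l + m ≤ n →
      Polynomial.aeval ((1 : ℝ) / (4 * n + 5)) (Q (l : ℤ) (m : ℤ) (n : ℤ)) < 0 ∧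
      0 < Polynomial.aeval ((1 : ℝ) / (4 * n + m + l + 6)) (Q (l : ℤ) (m : ℤ) (n : ℤ)) ∧
      ∀ R : ℝ, (0 < R ∧ Polynomial.aeval R (Q (l : ℤ) (m : ℤ) (n : ℤ)) = 0 ∧
          ∀ x : ℝ, 0 < x → Polynomial.aeval x (Q (l : ℤ) (m : ℤ) (n : ℤ)) = 0 → R ≤ x) →
        (1 : ℝ) / (4 * n + m + l + 6) < R ∧ R < 1 / (4 * n + 5) ∧
          (4 * n + 5 : ℝ) < 1 / R ∧ 1 / R < 4 * n + m + l + 6 := by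
    intro l m n hlmn
    have h45 : (0:ℝ) < 4 * n + 5 := by positivity
    have hD : (0:ℝ) < 4 * n + m + l + 6 := by positivity
    have hQt : Polynomial.aeval ((1 : ℝ) / (4 * n + 5)) (Q (l : ℤ) (m : ℤ) (n : ℤ)) < 0 :=
      key_neg l m n hlmn (by positivity) (by field_simp)
    have hQpos_all : ∀ x : ℝ, 0 < x → x * (4 * (n:ℝ) + m + l + 6) ≤ 1 →
        0 < Polynomial.aeval x (Q (l : ℤ) (m : ℤ) (n : ℤ)) :=
      fun x hx hxle => key_pos l m n hlmn hx hxle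
    have hQs : 0 < Polynomial.aeval ((1 : ℝ) / (4 * n + m + l + 6)) (Q (l : ℤ) (m : ℤ) (n : ℤ)) :=
      hQpos_all _ (by positivity) (by rw [one_div_mul_cancel hD.ne'])
    refine ⟨hQt, hQs, ?_⟩
    rintro R ⟨hR0, hRroot, hRmin⟩
    have hst : (1:ℝ) / (4 * n + m + l + 6) < 1 / (4 * n + 5) :=
      one_div_lt_one_div_of_lt h45 (by linarith)
    have hcont : Continuous fun y : ℝ => Polynomial.aeval y (Q (l : ℤ) (m : ℤ) (n : ℤ)) :=
      (Q (l : ℤ) (m : ℤ) (n : ℤ)).continuous_aeval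
    obtain ⟨r, hr, hr0⟩ := intermediate_value_Ioo' hst.le hcont.continuousOn
      (Set.mem_Ioo.mpr ⟨hQt, hQs⟩)
    have hspos : (0:ℝ) < 1 / (4 * n + m + l + 6) := by positivity
    have hRr : R ≤ r := hRmin r (lt_trans hspos hr.1) hr0
    have hRt : R < 1 / (4 * n + 5) := lt_of_le_of_lt hRr hr.2
    have hsR : (1:ℝ) / (4 * n + m + l + 6) < R := by
      by_contra hcon
      push_neg at hcon
      have hle : R * (4 * (n:ℝ) + m + l + 6) ≤ 1 := by
        have := mul_le_mul_of_nonneg_right hcon hD.le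
        rwa [one_div_mul_cancel hD.ne'] at this
      exact absurd hRroot (ne_of_gt (hQpos_all R hR0 hle))
    refine ⟨hsR, hRt, ?_, ?_⟩
    · rw [lt_div_iff₀ hR0]
      have := (lt_div_iff₀ h45).mp hRt
      linarith
    · rw [div_lt_iff₀ hR0]
      have := (div_lt_iff₀ hD).mp hsR
      linarith
  refine ⟨h1, ?_⟩
  intro l m τ hlm hex
  have hlow : ∀ n : ℕ, 4 * (n:ℝ) + 5 ≤ τ n := by
    intro n
    obtain ⟨R, hR0, hroot, hmin, hτ⟩ := hex n
    have h2 := (h1 (l n) (m n) n (hlm n)).2.2 R ⟨hR0, hroot, hmin⟩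
    rw [hτ]
    linarith [h2.2.2.1]
  apply Filter.tendsto_atTop_mono hlow
  exact Filter.tendsto_atTop_add_const_right _ 5
    (tendsto_natCast_atTop_atTop.const_mul_atTop (by norm_num))
end

section
/- For all nonnegative integers ℓ, m, n satisfying ℓ + m ≤ n and n - ℓ - m ≤ (n+1)/2, the polynomial Q_{ℓ,m,n}(t) has no factorization of the form Q_{ℓ,m,n}(t) = (1 + a·t + t²)·(1 + Σ_{k=1}^{8} b_k t^k + Σ_{k=1}^{7} b_{8-k} t^{k+8} + t^{16}) with a, b₁, ..., b₈ ∈ ℤ. In other words, Q_{ℓ,m,n} has no monic palindromic quadratic factor with constant term 1 over ℤ. -/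
open Polynomial

lemma coeff_intCast_ne (i : ℤ) (k : ℕ) (hk : k ≠ 0) : ((i : Polynomial ℤ)).coeff k = 0 := by
  rw [← Polynomial.C_eq_intCast, Polynomial.coeff_C, if_neg hk]

/- Single-variable sign lemmas.  Notation:
   F0, Fn, Fm, Fl are the pieces of the resultant polynomial f(a) = F0 + n Fn + m Fm + l Fl. -/

lemma aux_Fn_neg (a : ℤ) (h : a ≤ -3) :
    -4*a^8 - 2*a^7 + 29*a^6 + 9*a^5 - 63*a^4 - 11*a^3 + 41*a^2 + 3*a - 6 ≤ 0 := by
  obtain ⟨s, hs, rfl⟩ : ∃ s : ℤ, 0 ≤ s ∧ a = -3 - s := ⟨-3 - a, by omega, by ring⟩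
  nlinarith [pow_nonneg hs 2, pow_nonneg hs 3, pow_nonneg hs 4, pow_nonneg hs 5,
    pow_nonneg hs 6, pow_nonneg hs 7, pow_nonneg hs 8, hs]

lemma aux_Fm_neg (a : ℤ) (h : a ≤ -3) :
    a^7 + a^6 - 4*a^5 - 2*a^4 + 3*a^3 - 2*a^2 + a + 2 ≤ 0 := by
  obtain ⟨s, hs, rfl⟩ : ∃ s : ℤ, 0 ≤ s ∧ a = -3 - s := ⟨-3 - a, by omega, by ring⟩
  nlinarith [pow_nonneg hs 2, pow_nonneg hs 3, pow_nonneg hs 4, pow_nonneg hs 5,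
    pow_nonneg hs 6, pow_nonneg hs 7, hs]

lemma aux_Fl_neg (a : ℤ) (h : a ≤ -3) :
    -a^6 + 6*a^4 - a^3 - 10*a^2 + 2*a + 4 ≤ 0 := by
  obtain ⟨s, hs, rfl⟩ : ∃ s : ℤ, 0 ≤ s ∧ a = -3 - s := ⟨-3 - a, by omega, by ring⟩
  nlinarith [pow_nonneg hs 2, pow_nonneg hs 3, pow_nonneg hs 4, pow_nonneg hs 5,
    pow_nonneg hs 6, hs]

lemma aux_H_neg (a : ℤ) (h : a ≤ -3) :
    -2*a^8 + 5*a^7 + 18*a^6 - 26*a^5 - 38*a^4 + 30*a^3 + 12*a^2 + 3*a + 6 < 0 := by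
  obtain ⟨s, hs, rfl⟩ : ∃ s : ℤ, 0 ≤ s ∧ a = -3 - s := ⟨-3 - a, by omega, by ring⟩
  nlinarith [pow_nonneg hs 2, pow_nonneg hs 3, pow_nonneg hs 4, pow_nonneg hs 5,
    pow_nonneg hs 6, pow_nonneg hs 7, pow_nonneg hs 8, hs]

lemma aux_K_pos (a : ℤ) (h : a ≤ -6) :
    0 < a^8 + a^7 - 7*a^6 - 15*a^5 - a^4 + 41*a^3 + 40*a^2 - 24*a - 24 := by
  obtain ⟨s, hs, rfl⟩ : ∃ s : ℤ, 0 ≤ s ∧ a = -6 - s := ⟨-6 - a, by omega, by ring⟩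
  nlinarith [pow_nonneg hs 2, pow_nonneg hs 3, pow_nonneg hs 4, pow_nonneg hs 5,
    pow_nonneg hs 6, pow_nonneg hs 7, pow_nonneg hs 8, hs]

lemma aux_F0_neg (a : ℤ) (h : 2 ≤ a) :
    -a^9 - 6*a^8 + 6*a^7 + 43*a^6 - 11*a^5 - 91*a^4 + 4*a^3 + 55*a^2 + 3*a - 6 < 0 := by
  obtain ⟨s, hs, rfl⟩ : ∃ s : ℤ, 0 ≤ s ∧ a = 2 + s := ⟨a - 2, by omega, by ring⟩
  nlinarith [pow_nonneg hs 2, pow_nonneg hs 3, pow_nonneg hs 4, pow_nonneg hs 5,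
    pow_nonneg hs 6, pow_nonneg hs 7, pow_nonneg hs 8, pow_nonneg hs 9, hs]

lemma aux_Fm_pos (a : ℤ) (h : 2 ≤ a) :
    0 ≤ a^7 + a^6 - 4*a^5 - 2*a^4 + 3*a^3 - 2*a^2 + a + 2 := by
  obtain ⟨s, hs, rfl⟩ : ∃ s : ℤ, 0 ≤ s ∧ a = 2 + s := ⟨a - 2, by omega, by ring⟩
  nlinarith [pow_nonneg hs 2, pow_nonneg hs 3, pow_nonneg hs 4, pow_nonneg hs 5,
    pow_nonneg hs 6, pow_nonneg hs 7, hs]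

lemma aux_Fl_neg' (a : ℤ) (h : 2 ≤ a) :
    -a^6 + 6*a^4 - a^3 - 10*a^2 + 2*a + 4 ≤ 0 := by
  obtain ⟨s, hs, rfl⟩ : ∃ s : ℤ, 0 ≤ s ∧ a = 2 + s := ⟨a - 2, by omega, by ring⟩
  nlinarith [pow_nonneg hs 2, pow_nonneg hs 3, pow_nonneg hs 4, pow_nonneg hs 5,
    pow_nonneg hs 6, hs]

lemma aux_S_neg (a : ℤ) (h : 2 ≤ a) :
    -4*a^8 - a^7 + 30*a^6 + 5*a^5 - 65*a^4 - 8*a^3 + 39*a^2 + 4*a - 4 ≤ 0 := by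
  obtain ⟨s, hs, rfl⟩ : ∃ s : ℤ, 0 ≤ s ∧ a = 2 + s := ⟨a - 2, by omega, by ring⟩
  nlinarith [pow_nonneg hs 2, pow_nonneg hs 3, pow_nonneg hs 4, pow_nonneg hs 5,
    pow_nonneg hs 6, pow_nonneg hs 7, pow_nonneg hs 8, hs]

/-- The resultant polynomial `f(a)` has no integer root in the admissible range. -/
lemma key (a l m n : ℤ) (hl : 0 ≤ l) (hm : 0 ≤ m) (h1 : l + m ≤ n) (h2 : n ≤ 2*l + 2*m + 1) :
    -a^9 - (4*n+6)*a^8 + (m - 2*n + 6)*a^7 + (29*n + m - l + 43)*a^6 + (9*n - 4*m - 11)*a^5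
    + (6*l - 63*n - 2*m - 91)*a^4 + (3*m - 11*n - l + 4)*a^3 + (41*n - 2*m - 10*l + 55)*a^2
    + (3*n + m + 2*l + 3)*a + (4*l + 2*m - 6*n - 6) ≠ 0 := by
  intro h
  have hn : 0 ≤ n := le_trans (by linarith) h1
  have hmn : m ≤ n := by linarith
  have hln : l ≤ n := by linarith
  rcases (show a ≤ -(4*n+6) ∨ (-(4*n+5) ≤ a ∧ a ≤ -3) ∨ a = -2 ∨ a = -1 ∨ a = 0 ∨ a = 1
      ∨ 2 ≤ a by omega) with h0 | ⟨ha1, ha2⟩ | rfl | rfl | rfl | rfl | h0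
  · -- a ≤ -(4n+6): f(a) > 0
    have ha3 : a ≤ -3 := by linarith
    have ha6 : a ≤ -6 := by linarith
    have t1 := aux_Fn_neg a ha3
    have t2 := aux_Fm_neg a ha3
    have t3 := aux_Fl_neg a ha3
    have tK := aux_K_pos a ha6
    have p2 : 0 ≤ (n - m) * (-(a^7 + a^6 - 4*a^5 - 2*a^4 + 3*a^3 - 2*a^2 + a + 2)) :=
      mul_nonneg (by linarith) (by linarith)
    have p3 : 0 ≤ (n - l) * (-(-a^6 + 6*a^4 - a^3 - 10*a^2 + 2*a + 4)) :=
      mul_nonneg (by linarith) (by linarith)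
    have p4 : 0 ≤ (-(4*n + a + 6)) *
        (-((-4*a^8 - 2*a^7 + 29*a^6 + 9*a^5 - 63*a^4 - 11*a^3 + 41*a^2 + 3*a - 6)
          + (a^7 + a^6 - 4*a^5 - 2*a^4 + 3*a^3 - 2*a^2 + a + 2)
          + (-a^6 + 6*a^4 - a^3 - 10*a^2 + 2*a + 4))) :=
      mul_nonneg (by linarith) (by linarith)
    nlinarith [p2, p3, p4, tK, h]
  · -- -(4n+5) ≤ a ≤ -3: f(a) < 0
    have t1 := aux_Fn_neg a ha2
    have t2 := aux_Fm_neg a ha2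
    have t3 := aux_Fl_neg a ha2
    have tH := aux_H_neg a ha2
    have p2 : m * (a^7 + a^6 - 4*a^5 - 2*a^4 + 3*a^3 - 2*a^2 + a + 2) ≤ 0 :=
      mul_nonpos_of_nonneg_of_nonpos hm t2
    have p3 : l * (-a^6 + 6*a^4 - a^3 - 10*a^2 + 2*a + 4) ≤ 0 :=
      mul_nonpos_of_nonneg_of_nonpos hl t3
    have p4 : (4*n + a + 5) *
        (-4*a^8 - 2*a^7 + 29*a^6 + 9*a^5 - 63*a^4 - 11*a^3 + 41*a^2 + 3*a - 6) ≤ 0 :=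
      mul_nonpos_of_nonneg_of_nonpos (by linarith) t1
    nlinarith [p2, p3, p4, tH, h]
  · -- a = -2
    norm_num at h; omega
  · -- a = -1
    norm_num at h; omega
  · -- a = 0
    norm_num at h; omega
  · -- a = 1
    norm_num at h; omega
  · -- 2 ≤ a: f(a) < 0
    have t0 := aux_F0_neg a h0
    have t2 := aux_Fm_pos a h0
    have t3 := aux_Fl_neg' a h0
    have tS := aux_S_neg a h0
    have p2 : (m - n) * (a^7 + a^6 - 4*a^5 - 2*a^4 + 3*a^3 - 2*a^2 + a + 2) ≤ 0 :=
      mul_nonpos_of_nonpos_of_nonneg (by linarith) t2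
    have p3 : l * (-a^6 + 6*a^4 - a^3 - 10*a^2 + 2*a + 4) ≤ 0 :=
      mul_nonpos_of_nonneg_of_nonpos hl t3
    have p4 : n * (-4*a^8 - a^7 + 30*a^6 + 5*a^5 - 65*a^4 - 8*a^3 + 39*a^2 + 4*a - 4) ≤ 0 :=
      mul_nonpos_of_nonneg_of_nonpos hn tS
    nlinarith [p2, p3, p4, t0, h]

set_option maxHeartbeats 1600000 in
theorem stmt_17 (l m n : ℕ) (h1 : l + m ≤ n) (h2 : n - l - m ≤ (n + 1) / 2) :
    ¬ ∃ (a : ℤ) (b : ℕ → ℤ),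
      Q (l : ℤ) (m : ℤ) (n : ℤ)
        = (1 + C a * X + X ^ 2) *
          (1 + (∑ k ∈ Finset.Icc 1 8, C (b k) * X ^ k)
             + (∑ k ∈ Finset.Icc 1 7, C (b (8 - k)) * X ^ (k + 8)) + X ^ 16) := by
  rintro ⟨a, b, hQ⟩
  rw [show (Finset.Icc 1 8 : Finset ℕ) = {1,2,3,4,5,6,7,8} from rfl,
      show (Finset.Icc 1 7 : Finset ℕ) = {1,2,3,4,5,6,7} from rfl, Q] at hQ
  simp [Finset.sum_insert, Finset.mem_insert] at hQ
  ring_nf at hQ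
  have e1 := congrArg (fun p => coeff p 1) hQ
  simp [coeff_one, coeff_X_pow, coeff_X, coeff_intCast_ne, mul_comm] at e1
  have e2 := congrArg (fun p => coeff p 2) hQ
  simp [coeff_one, coeff_X_pow, coeff_X, coeff_intCast_ne, mul_comm] at e2
  have e3 := congrArg (fun p => coeff p 3) hQ
  simp [coeff_one, coeff_X_pow, coeff_X, coeff_intCast_ne, mul_comm] at e3
  have e4 := congrArg (fun p => coeff p 4) hQ
  simp [coeff_one, coeff_X_pow, coeff_X, coeff_intCast_ne, mul_comm] at e4
  have e5 := congrArg (fun p => coeff p 5) hQ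
  simp [coeff_one, coeff_X_pow, coeff_X, coeff_intCast_ne, mul_comm] at e5
  have e6 := congrArg (fun p => coeff p 6) hQ
  simp [coeff_one, coeff_X_pow, coeff_X, coeff_intCast_ne, mul_comm] at e6
  have e7 := congrArg (fun p => coeff p 7) hQ
  simp [coeff_one, coeff_X_pow, coeff_X, coeff_intCast_ne, mul_comm] at e7
  have e8 := congrArg (fun p => coeff p 8) hQ
  simp [coeff_one, coeff_X_pow, coeff_X, coeff_intCast_ne, mul_comm] at e8
  have e9 := congrArg (fun p => coeff p 9) hQ
  simp [coeff_one, coeff_X_pow, coeff_X, coeff_intCast_ne, mul_comm] at e9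
  have hf : -a^9 - (4*(n:ℤ)+6)*a^8 + ((m:ℤ) - 2*n + 6)*a^7 + (29*(n:ℤ) + m - l + 43)*a^6
      + (9*(n:ℤ) - 4*m - 11)*a^5 + (6*(l:ℤ) - 63*n - 2*m - 91)*a^4
      + (3*(m:ℤ) - 11*n - l + 4)*a^3 + (41*(n:ℤ) - 2*m - 10*l + 55)*a^2
      + (3*(n:ℤ) + m + 2*l + 3)*a + (4*(l:ℤ) + 2*m - 6*n - 6) = 0 := by
    linear_combination (a^8 - 8*a^6 + 20*a^4 - 16*a^2 + 2) * e1
      + (-a^7 + 7*a^5 - 14*a^3 + 7*a) * e2 + (a^6 - 6*a^4 + 9*a^2 - 2) * e3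
      + (-a^5 + 5*a^3 - 5*a) * e4 + (a^4 - 4*a^2 + 2) * e5 + (-a^3 + 3*a) * e6
      + (a^2 - 2) * e7 + (-a) * e8 + e9
  have hl : (0:ℤ) ≤ l := Int.natCast_nonneg l
  have hm : (0:ℤ) ≤ m := Int.natCast_nonneg m
  have h1' : (l:ℤ) + m ≤ n := by exact_mod_cast h1
  have h2' : (n:ℤ) ≤ 2*l + 2*m + 1 := by omega
  exact key a l m n hl hm h1' h2' hf
end

section
/- For every nonnegative integer n with n ≡ 1 (mod 3), there are no integers a, b satisfying simultaneously f(a,b) = 0 and g(a,b) = 0, where f and g are the two polynomial consistency equations (in a, b, and n, with ℓ = 0, m = n) arising from assuming Q_{0,n,n}(t) = (1 + a t + b t² + a t³ + t⁴)·(monic palindromic degree-14 cofactor with integer coefficients). Consequently, Q_{0,n,n}(t) has no monic palindromic quartic factor with constant term 1 over ℤ when n ≡ 1 (mod 3). -/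
open Polynomial

/-- The first consistency equation `f_{ℓ,m,n}(a,b)` from the paper's proof. -/
def fcons (l m n a b : ℤ) : ℤ :=
  -1 - a ^ 8 - b ^ 4 - m + a ^ 7 * (-6 - 4 * n) + b ^ 2 * (1 + 2 * m - 3 * n)
    + a ^ 6 * (-8 + 7 * b + m - 2 * n) + b * (l + m - n) + n + b ^ 3 * (2 - m + 2 * n)
    + a ^ 4 * (-11 - 15 * b ^ 2 + 6 * m - 11 * n + b * (30 - 5 * m + 10 * n))
    + a * (15 + 2 * l + 2 * m + b * (-46 - 8 * m - 30 * n)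
        + b ^ 2 * (-15 - 3 * l + 3 * m - 9 * n) + 9 * n + b ^ 3 * (24 + 16 * n))
    + a ^ 2 * (2 + 10 * b ^ 3 - l + 3 * m + b ^ 2 * (-24 + 6 * m - 12 * n) - 5 * n
        + b * (9 - 12 * m + 21 * n))
    + a ^ 5 * (-29 - l + m - 19 * n + b * (36 + 24 * n))
    + a ^ 3 * (13 - 2 * l + 6 * m + b ^ 2 * (-60 - 40 * n) + 9 * n
        + b * (68 + 4 * l - 4 * m + 44 * n))

/-- The second consistency equation `g_{ℓ,m,n}(a,b)` from the paper's proof. -/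
def gcons (l m n a b : ℤ) : ℤ :=
  12 + a ^ 7 * (2 - b) + 2 * m + b ^ 2 * (-23 - 4 * m - 15 * n)
    + b ^ 3 * (-5 - l + m - 3 * n) + 8 * n + b ^ 4 * (6 + 4 * n)
    + a ^ 5 * (12 + 6 * b ^ 2 - 2 * m + b * (-18 + m - 2 * n) + 4 * n)
    + a ^ 6 * (12 + b * (-6 - 4 * n) + 8 * n)
    + b * (15 + 2 * l + 2 * m + 9 * n)
    + a ^ 3 * (6 - 10 * b ^ 3 - 8 * m + b * (-35 + 12 * m - 23 * n) + 14 * n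
        + b ^ 2 * (36 - 4 * m + 8 * n))
    + a * (4 * b ^ 4 + 2 * l + 2 * m + b * (4 - l + 7 * m - 11 * n)
        + b ^ 3 * (-14 + 3 * m - 6 * n) - 2 * n + b ^ 2 * (10 - 10 * m + 18 * n))
    + a ^ 4 * (34 + 2 * l - 2 * m + b * (-77 - l + m - 51 * n) + 22 * n
        + b ^ 2 * (30 + 20 * n))
    + a ^ 2 * (-46 - 8 * m + b ^ 3 * (-36 - 24 * n) + b * (-7 - 6 * l + 10 * m - 3 * n)
        - 30 * n + b ^ 2 * (87 + 3 * l - 3 * m + 57 * n))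


/-- `fcons` over an arbitrary commutative ring (here used with `ZMod 3`). -/
def fcons3 (l m n a b : ZMod 3) : ZMod 3 :=
  -1 - a ^ 8 - b ^ 4 - m + a ^ 7 * (-6 - 4 * n) + b ^ 2 * (1 + 2 * m - 3 * n)
    + a ^ 6 * (-8 + 7 * b + m - 2 * n) + b * (l + m - n) + n + b ^ 3 * (2 - m + 2 * n)
    + a ^ 4 * (-11 - 15 * b ^ 2 + 6 * m - 11 * n + b * (30 - 5 * m + 10 * n))
    + a * (15 + 2 * l + 2 * m + b * (-46 - 8 * m - 30 * n)
        + b ^ 2 * (-15 - 3 * l + 3 * m - 9 * n) + 9 * n + b ^ 3 * (24 + 16 * n))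
    + a ^ 2 * (2 + 10 * b ^ 3 - l + 3 * m + b ^ 2 * (-24 + 6 * m - 12 * n) - 5 * n
        + b * (9 - 12 * m + 21 * n))
    + a ^ 5 * (-29 - l + m - 19 * n + b * (36 + 24 * n))
    + a ^ 3 * (13 - 2 * l + 6 * m + b ^ 2 * (-60 - 40 * n) + 9 * n
        + b * (68 + 4 * l - 4 * m + 44 * n))

/-- `gcons` over `ZMod 3`. -/
def gcons3 (l m n a b : ZMod 3) : ZMod 3 :=
  12 + a ^ 7 * (2 - b) + 2 * m + b ^ 2 * (-23 - 4 * m - 15 * n)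
    + b ^ 3 * (-5 - l + m - 3 * n) + 8 * n + b ^ 4 * (6 + 4 * n)
    + a ^ 5 * (12 + 6 * b ^ 2 - 2 * m + b * (-18 + m - 2 * n) + 4 * n)
    + a ^ 6 * (12 + b * (-6 - 4 * n) + 8 * n)
    + b * (15 + 2 * l + 2 * m + 9 * n)
    + a ^ 3 * (6 - 10 * b ^ 3 - 8 * m + b * (-35 + 12 * m - 23 * n) + 14 * n
        + b ^ 2 * (36 - 4 * m + 8 * n))
    + a * (4 * b ^ 4 + 2 * l + 2 * m + b * (4 - l + 7 * m - 11 * n)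
        + b ^ 3 * (-14 + 3 * m - 6 * n) - 2 * n + b ^ 2 * (10 - 10 * m + 18 * n))
    + a ^ 4 * (34 + 2 * l - 2 * m + b * (-77 - l + m - 51 * n) + 22 * n
        + b ^ 2 * (30 + 20 * n))
    + a ^ 2 * (-46 - 8 * m + b ^ 3 * (-36 - 24 * n) + b * (-7 - 6 * l + 10 * m - 3 * n)
        - 30 * n + b ^ 2 * (87 + 3 * l - 3 * m + 57 * n))

lemma fcons_cast (l m n a b : ℤ) :
    ((fcons l m n a b : ℤ) : ZMod 3) = fcons3 l m n a b := by
  simp only [fcons, fcons3]; push_cast; ring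

lemma gcons_cast (l m n a b : ℤ) :
    ((gcons l m n a b : ℤ) : ZMod 3) = gcons3 l m n a b := by
  simp only [gcons, gcons3]; push_cast; ring

lemma key3 : ∀ A B : ZMod 3, ¬ (fcons3 0 1 1 A B = 0 ∧ gcons3 0 1 1 A B = 0) := by
  decide

theorem stmt_19 (n : ℕ) (hn : n % 3 = 1) :
    (¬ ∃ a b : ℤ, fcons 0 (n : ℤ) (n : ℤ) a b = 0 ∧ gcons 0 (n : ℤ) (n : ℤ) a b = 0) ∧
    ¬ ∃ (a b : ℤ) (c : ℕ → ℤ),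
      Q 0 (n : ℤ) (n : ℤ)
        = (1 + C a * X + C b * X ^ 2 + C a * X ^ 3 + X ^ 4) *
          (1 + (∑ k ∈ Finset.Icc 1 7, C (c k) * X ^ k)
             + (∑ k ∈ Finset.Icc 1 6, C (c (7 - k)) * X ^ (k + 7)) + X ^ 14) := by
  have hn3 : ((n : ℤ) : ZMod 3) = 1 := by
    have h1 : ((n : ℤ) : ZMod 3) = ((n : ℕ) : ZMod 3) := by push_cast; ring
    rw [h1, ← Nat.mod_add_div n 3, hn]
    push_cast
    rw [show (3 : ZMod 3) = 0 by decide]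
    ring
  have h1 : ¬ ∃ a b : ℤ, fcons 0 (n : ℤ) (n : ℤ) a b = 0 ∧ gcons 0 (n : ℤ) (n : ℤ) a b = 0 := by
    rintro ⟨a, b, hf, hg⟩
    apply key3 ((a : ℤ) : ZMod 3) ((b : ℤ) : ZMod 3)
    constructor
    · have := congrArg (fun z : ℤ => (z : ZMod 3)) hf
      simp only [Int.cast_zero] at this
      rw [fcons_cast, hn3] at this
      simpa using this
    · have := congrArg (fun z : ℤ => (z : ZMod 3)) hg
      simp only [Int.cast_zero] at this
      rw [gcons_cast, hn3] at this
      simpa using this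
  refine ⟨h1, ?_⟩
  rintro ⟨a, b, c, h⟩
  set N : ℤ := (n : ℤ) with hN
  have hcof : (1 + (∑ k ∈ Finset.Icc 1 7, C (c k) * X ^ k)
             + (∑ k ∈ Finset.Icc 1 6, C (c (7 - k)) * X ^ (k + 7)) + X ^ 14 : ℤ[X])
      = 1 + C (c 1) * X + C (c 2) * X^2 + C (c 3) * X^3 + C (c 4) * X^4 + C (c 5) * X^5
      + C (c 6) * X^6 + C (c 7) * X^7 + C (c 6) * X^8 + C (c 5) * X^9 + C (c 4) * X^10
      + C (c 3) * X^11 + C (c 2) * X^12 + C (c 1) * X^13 + X^14 := by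
    norm_num [Finset.sum_Icc_succ_top, show Finset.Icc 1 0 = (∅ : Finset ℕ) by decide]
    ring
  rw [hcof] at h
  have h2 : Q 0 N N = C (1) * X^0 + C ((c 1) + a) * X^1 + C ((c 2) + b + a * (c 1)) * X^2 + C ((c 3) + b * (c 1) + a + a * (c 2)) * X^3 + C (1 + (c 4) + b * (c 2) + a * (c 3) + a * (c 1)) * X^4 + C ((c 5) + (c 1) + b * (c 3) + a * (c 4) + a * (c 2)) * X^5 + C ((c 6) + (c 2) + b * (c 4) + a * (c 5) + a * (c 3)) * X^6 + C ((c 7) + (c 3) + b * (c 5) + a * (c 6) + a * (c 4)) * X^7 + C ((c 6) + (c 4) + b * (c 6) + a * (c 7) + a * (c 5)) * X^8 + C (2 * (c 5) + b * (c 7) + 2 * a * (c 6)) * X^9 + C ((c 6) + (c 4) + b * (c 6) + a * (c 7) + a * (c 5)) * X^10 + C ((c 7) + (c 3) + b * (c 5) + a * (c 6) + a * (c 4)) * X^11 + C ((c 6) + (c 2) + b * (c 4) + a * (c 5) + a * (c 3)) * X^12 + C ((c 5) + (c 1) + b * (c 3) + a * (c 4) + a * (c 2)) * X^13 + C (1 +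 (c 4) + b * (c 2) + a * (c 3) + a * (c 1)) * X^14 + C ((c 3) + b * (c 1) + a + a * (c 2)) * X^15 + C ((c 2) + b + a * (c 1)) * X^16 + C ((c 1) + a) * X^17 + C (1) * X^18 := by
    rw [h]
    simp only [map_add, map_mul, map_one, map_ofNat, map_pow]
    ring
  have t17 := congrArg (fun p => p.coeff 17) h2
  simp only [Q, coeff_add, coeff_sub, coeff_C_mul, coeff_X_pow, coeff_X, coeff_one] at t17
  norm_num at t17
  have t16 := congrArg (fun p => p.coeff 16) h2
  simp only [Q, coeff_add, coeff_sub, coeff_C_mul, coeff_X_pow, coeff_X, coeff_one] at t16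
  norm_num at t16
  have t15 := congrArg (fun p => p.coeff 15) h2
  simp only [Q, coeff_add, coeff_sub, coeff_C_mul, coeff_X_pow, coeff_X, coeff_one] at t15
  norm_num at t15
  have t14 := congrArg (fun p => p.coeff 14) h2
  simp only [Q, coeff_add, coeff_sub, coeff_C_mul, coeff_X_pow, coeff_X, coeff_one] at t14
  norm_num at t14
  have t13 := congrArg (fun p => p.coeff 13) h2
  simp only [Q, coeff_add, coeff_sub, coeff_C_mul, coeff_X_pow, coeff_X, coeff_one] at t13
  norm_num at t13
  have t12 := congrArg (fun p => p.coeff 12) h2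
  simp only [Q, coeff_add, coeff_sub, coeff_C_mul, coeff_X_pow, coeff_X, coeff_one] at t12
  norm_num at t12
  have t11 := congrArg (fun p => p.coeff 11) h2
  simp only [Q, coeff_add, coeff_sub, coeff_C_mul, coeff_X_pow, coeff_X, coeff_one] at t11
  norm_num at t11
  have t10 := congrArg (fun p => p.coeff 10) h2
  simp only [Q, coeff_add, coeff_sub, coeff_C_mul, coeff_X_pow, coeff_X, coeff_one] at t10
  norm_num at t10
  have t9 := congrArg (fun p => p.coeff 9) h2
  simp only [Q, coeff_add, coeff_sub, coeff_C_mul, coeff_X_pow, coeff_X, coeff_one] at t9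
  norm_num at t9
  have hc1 : c 1 = ((-6 + -1 * a + -4 * n)) := by
    linear_combination (norm := ring1) (-t17)
  have hc2 : c 2 = ((3 + -1 * b + 6 * a + a^2 + n + 4 * n * a)) := by
    linear_combination (norm := ring1) (-t16) - a * hc1
  have hc3 : c 3 = ((-5 + 6 * b + -4 * a + 2 * a * b + -6 * a^2 + -1 * a^3 + -2 * n + 4 * n * b + -1 * n * a + -4 * n * a^2)) := by
    linear_combination (norm := ring1) (-t15) - b * hc1 - a * hc2
  have hc4 : c 4 = ((4 + -3 * b + b^2 + 11 * a + -12 * a * b + 5 * a^2 + -3 * a^2 * b + 6 * a^3 + a^4 + 2 * n + -1 * n * b + 6 * n * a + -8 * n * a * b + n * a^2 + 4 * n * a^3)) := by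
    linear_combination (norm := ring1) (-t14) - a * hc1 - b * hc2 - a * hc3
  have hc5 : c 5 = ((5 + 5 * b + -6 * b^2 + -6 * a + 8 * a * b + -3 * a * b^2 + -17 * a^2 + 18 * a^2 * b + -6 * a^3 + 4 * a^3 * b + -6 * a^4 + -1 * a^5 + 7 * n + 2 * n * b + -4 * n * b^2 + -3 * n * a + 2 * n * a * b + -10 * n * a^2 + 12 * n * a^2 * b + -1 * n * a^3 + -4 * n * a^4)) := by
    linear_combination (norm := ring1) (-t13) - hc1 - a * hc2 - b * hc3 - a * hc4
  have hc6 : c 6 = ((6 + -3 * b + 3 * b^2 + -1 * b^3 + -6 * a + -22 * a * b + 18 * a * b^2 + 9 * a^2 + -15 * a^2 * b + 6 * a^2 * b^2 + 23 * a^3 + -24 * a^3 * b + 7 * a^4 + -5 * a^4 * b + 6 * a^5 + a^6 + 3 * n + -2 * n * b + n * b^2 + -9 * n * a + -12 * n * a * b + 12 * n * a * b^2 + 4 * n * a^2 + -3 * n * a^2 * b + 14 * n * a^3 + -16 * n * a^3 * b + n * a^4 + 4 * n * a^5)) := by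
    linear_combination (norm := ring1) (-t12) - hc2 - a * hc3 - b * hc4 - a * hc5
  have hc7 : c 7 = ((5 + -11 * b + -5 * b^2 + 6 * b^3 + -6 * a + 10 * a * b + -12 * a * b^2 + 4 * a * b^3 + a^2 + 51 * a^2 * b + -36 * a^2 * b^2 + -13 * a^3 + 24 * a^3 * b + -10 * a^3 * b^2 + -29 * a^4 + 30 * a^4 * b + -8 * a^5 + 6 * a^5 * b + -6 * a^6 + -1 * a^7 + 7 * n + -11 * n * b + -2 * n * b^2 + 4 * n * b^3 + -4 * n * a + 6 * n * a * b + -3 * n * a * b^2 + 7 * n * a^2 + 30 * n * a^2 * b + -24 * n * a^2 * b^2 + -5 * n * a^3 + 4 * n * a^3 * b + -18 * n * a^4 + 20 * n * a^4 * b + -1 * n * a^5 + -4 * n * a^6)) := by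
    linear_combination (norm := ring1) (-t11) - hc3 - a * hc4 - b * hc5 - a * hc6
  refine h1 ⟨a, b, ?_, ?_⟩
  · show fcons 0 N N a b = 0
    simp only [fcons]
    linear_combination (norm := ring1) (-t10) - hc4 - a * hc5 - (b + 1) * hc6 - a * hc7
  · show gcons 0 N N a b = 0
    simp only [gcons]
    linear_combination (norm := ring1) (-t9) - 2 * hc5 - 2 * a * hc6 - b * hc7
end
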